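/- arXiv:1110.4137 — 7 statements merged into one kernel-verified Lean document; each statement's English description precedes it below -/
import Mathlib

section
/- Let n, m ≥ 1 and let Γ = (w; a_1,…,a_{n−1}) be a depth-ordering on n points with a_p ≤ m−1 for every p. Then the Fox–Neuwirth cell Conf_Γ(m), with its subspace topology, is homeomorphic to the Euclidean space ℝ^d of dimension d = mn − (a_1+⋯+a_{n−1}). -/
namespace FoxNeuwirth

/-- The space of configurations of `n` distinct labeled points in `ℝ^m`: injective maps
`Fin n → ℝ^m`, topologized as a subspace of `(ℝ^m)^n`. -/
abbrev Conf (n m : ℕ) : Type := {x : Fin n → (Fin m → ℝ) // Function.Injective x}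

/-- The Fox-Neuwirth cell of the depth-ordering `(w; a)`: the set of configurations `x` such
that for each `p`, the points `x (w p)` and `x (w (p+1))` agree in their first `a p`
coordinates and the `(a p + 1)`-st coordinate of `x (w p)` is strictly less than that of
`x (w (p+1))`. -/
def cell (n m : ℕ) (w : Fin n → Fin n) (a : Fin (n - 1) → ℕ) : Set (Conf n m) :=
  {x | ∀ p : Fin (n - 1),
    (∀ q : Fin m, (q : ℕ) < a p →
        x.1 (w ⟨p.1, lt_of_lt_of_le p.2 (Nat.sub_le n 1)⟩) q
          = x.1 (w ⟨p.1 + 1, by have := p.2; omega⟩) q) ∧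
    (∀ q : Fin m, (q : ℕ) = a p →
        x.1 (w ⟨p.1, lt_of_lt_of_le p.2 (Nat.sub_le n 1)⟩) q
          < x.1 (w ⟨p.1 + 1, by have := p.2; omega⟩) q)}

section Aux
variable {k : ℕ} (l : ℕ) (a : Fin k → ℕ)

/-- The "consecutive" condition describing a Fox-Neuwirth cell after reordering by `w`. -/
def Q (y : Fin (k+1) → Fin (l+1) → ℝ) : Prop :=
  ∀ p : Fin k,
    (∀ q : Fin (l+1), (q : ℕ) < a p → y p.castSucc q = y p.succ q) ∧
    (∀ q : Fin (l+1), (q : ℕ) = a p → y p.castSucc q < y p.succ q)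

/-- Lexicographic comparison of two points. -/
def LexLt (y : Fin (k+1) → Fin (l+1) → ℝ) (i j : Fin (k+1)) : Prop :=
  ∃ q : Fin (l+1), (∀ r : Fin (l+1), r < q → y i r = y j r) ∧ y i q < y j q

lemma lexLt_trans {l : ℕ} {y : Fin (k+1) → Fin (l+1) → ℝ} {i j t : Fin (k+1)}
    (h1 : LexLt l y i j) (h2 : LexLt l y j t) : LexLt l y i t := by
  obtain ⟨q1, hq1, hq1'⟩ := h1
  obtain ⟨q2, hq2, hq2'⟩ := h2
  refine ⟨min q1 q2, fun r hr => ?_, ?_⟩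
  · rw [hq1 r (lt_of_lt_of_le hr (min_le_left _ _)),
      hq2 r (lt_of_lt_of_le hr (min_le_right _ _))]
  · rcases lt_trichotomy q1 q2 with h | h | h
    · rw [min_eq_left h.le]
      calc y i q1 < y j q1 := hq1'
        _ = y t q1 := hq2 q1 h
    · subst h
      rw [min_self]
      exact hq1'.trans hq2'
    · rw [min_eq_right h.le]
      calc y i q2 = y j q2 := hq1 q2 h
        _ < y t q2 := hq2'

lemma Q_lexLt_consec (ha : ∀ p, a p ≤ l) {y : Fin (k+1) → Fin (l+1) → ℝ} (hy : Q l a y)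
    (p : Fin k) : LexLt l y p.castSucc p.succ := by
  refine ⟨⟨a p, Nat.lt_succ_of_le (ha p)⟩, fun r hr => (hy p).1 r hr, (hy p).2 _ rfl⟩

lemma Q_lexLt (ha : ∀ p, a p ≤ l) {y : Fin (k+1) → Fin (l+1) → ℝ} (hy : Q l a y)
    {i j : Fin (k+1)} (hij : i < j) : LexLt l y i j := by
  obtain ⟨d, hd⟩ : ∃ d, (j : ℕ) = (i : ℕ) + d + 1 := ⟨(j : ℕ) - (i : ℕ) - 1, by omega⟩
  induction d generalizing j with
  | zero =>
      have hik : (i : ℕ) < k := by have := j.2; omega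
      have hi : i = (⟨(i : ℕ), hik⟩ : Fin k).castSucc := by ext; rfl
      have hj : j = (⟨(i : ℕ), hik⟩ : Fin k).succ := by ext; simpa using hd
      rw [hi, hj]; exact Q_lexLt_consec l a ha hy _
  | succ d ih =>
      have hmk : (i : ℕ) + d + 1 < k + 1 := by have := j.2; omega
      set mid : Fin (k+1) := ⟨(i : ℕ) + d + 1, hmk⟩ with hmid
      have h1 : LexLt l y i mid := ih (by simp [hmid, Fin.lt_def] <;> omega) rfl
      have hik : (mid : ℕ) < k := by have := j.2; simp [hmid]; omega
      have h2 : LexLt l y mid j := by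
        have hi : mid = (⟨(mid : ℕ), hik⟩ : Fin k).castSucc := by ext; rfl
        have hj : j = (⟨(mid : ℕ), hik⟩ : Fin k).succ := by ext; simp [hmid]; omega
        rw [hi, hj]; exact Q_lexLt_consec l a ha hy _
      exact lexLt_trans h1 h2

lemma Q_injective (ha : ∀ p, a p ≤ l) {y : Fin (k+1) → Fin (l+1) → ℝ} (hy : Q l a y) :
    Function.Injective y := by
  intro i j hij
  by_contra hne
  rcases lt_trichotomy i j with h | h | h
  · obtain ⟨q, -, hq⟩ := Q_lexLt l a ha hy h
    rw [hij] at hq; exact lt_irrefl _ hq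
  · exact hne h
  · obtain ⟨q, -, hq⟩ := Q_lexLt l a ha hy h
    rw [hij] at hq; exact lt_irrefl _ hq

/-- The index set of "free" coordinates. -/
def Kset : Set (Fin (k+1) × Fin (l+1)) :=
  {c | ∀ p : Fin k, c.1 = p.succ → a p ≤ (c.2 : ℕ)}

def Zset : Set (Fin (k+1) × Fin (l+1)) :=
  {c | ∃ p : Fin k, c.1 = p.succ ∧ (c.2 : ℕ) < a p}

lemma zero_mem_Kset (q : Fin (l+1)) : ((0 : Fin (k+1)), q) ∈ Kset l a :=
  fun p hp => absurd hp.symm (Fin.succ_ne_zero p)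

lemma succ_mem_Kset {p : Fin k} {q : Fin (l+1)} (h : ¬ (q : ℕ) < a p) :
    ((p.succ : Fin (k+1)), q) ∈ Kset l a := by
  intro p' hp'
  obtain rfl : p = p' := Fin.succ_injective _ hp'
  exact Nat.le_of_not_lt h

noncomputable def Phi (y : Fin (k+1) → Fin (l+1) → ℝ) (c : Fin (k+1) × Fin (l+1)) : ℝ :=
  Fin.cases (y 0 c.2)
    (fun p => if (c.2 : ℕ) = a p then Real.log (y p.succ c.2 - y p.castSucc c.2)
      else y p.succ c.2) c.1

noncomputable def Psi (f : Kset l a → ℝ) : Fin (k+1) → Fin (l+1) → ℝ :=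
  Fin.induction
    (fun q => f ⟨((0 : Fin (k+1)), q), zero_mem_Kset l a q⟩)
    (fun p prev q =>
      if h1 : (q : ℕ) < a p then prev q
      else if _h2 : (q : ℕ) = a p then
        prev q + Real.exp (f ⟨(p.succ, q), succ_mem_Kset l a h1⟩)
      else f ⟨(p.succ, q), succ_mem_Kset l a h1⟩)

lemma Psi_zero (f : Kset l a → ℝ) (q : Fin (l+1)) :
    Psi l a f 0 q = f ⟨((0 : Fin (k+1)), q), zero_mem_Kset l a q⟩ := by
  simp [Psi]

lemma Psi_succ (f : Kset l a → ℝ) (p : Fin k) (q : Fin (l+1)) :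
    Psi l a f p.succ q =
      if h1 : (q : ℕ) < a p then Psi l a f p.castSucc q
      else if _h2 : (q : ℕ) = a p then
        Psi l a f p.castSucc q + Real.exp (f ⟨(p.succ, q), succ_mem_Kset l a h1⟩)
      else f ⟨(p.succ, q), succ_mem_Kset l a h1⟩ := by
  simp only [Psi, Fin.induction_succ]

lemma Q_Psi (f : Kset l a → ℝ) : Q l a (Psi l a f) := by
  intro p
  constructor
  · intro q hq
    rw [Psi_succ, dif_pos hq]
  · intro q hq
    rw [Psi_succ, dif_neg (by omega), dif_pos hq]
    have := Real.exp_pos (f ⟨(p.succ, q), succ_mem_Kset l a (by omega)⟩)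
    linarith

lemma Phi_Psi (f : Kset l a → ℝ) : (fun c : Kset l a => Phi l a (Psi l a f) c.1) = f := by
  funext c
  obtain ⟨⟨i, q⟩, hc⟩ := c
  induction i using Fin.cases with
  | zero =>
      simp only [Phi, Fin.cases_zero]
      rw [Psi_zero]
  | succ p =>
      have hle : a p ≤ (q : ℕ) := hc p rfl
      simp only [Phi, Fin.cases_succ]
      by_cases h : (q : ℕ) = a p
      · rw [if_pos h, Psi_succ, dif_neg (by omega), dif_pos h]
        simp [Real.log_exp]
      · rw [if_neg h, Psi_succ, dif_neg (by omega), dif_neg h]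

lemma Psi_Phi {y : Fin (k+1) → Fin (l+1) → ℝ} (hy : Q l a y) :
    Psi l a (fun c : Kset l a => Phi l a y c.1) = y := by
  funext i
  induction i using Fin.induction with
  | zero =>
      funext q
      rw [Psi_zero]
      rfl
  | succ p ih =>
      funext q
      rw [Psi_succ]
      by_cases h1 : (q : ℕ) < a p
      · rw [dif_pos h1, ih]
        exact (hy p).1 q h1
      · by_cases h2 : (q : ℕ) = a p
        · rw [dif_neg h1, dif_pos h2, ih]
          show y p.castSucc q + Real.exp (Phi l a y (p.succ, q)) = y p.succ q
          have hpos : 0 < y p.succ q - y p.castSucc q := by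
            have := (hy p).2 q h2
            linarith
          simp only [Phi, Fin.cases_succ, if_pos h2]
          rw [Real.exp_log hpos]
          ring
        · rw [dif_neg h1, dif_neg h2]
          show Phi l a y (p.succ, q) = y p.succ q
          simp only [Phi, Fin.cases_succ, if_neg h2]

lemma continuous_PhiR :
    Continuous fun y : {y : Fin (k+1) → Fin (l+1) → ℝ // Q l a y} =>
      (fun c : Kset l a => Phi l a y.1 c.1) := by
  apply continuous_pi
  rintro ⟨⟨i, q⟩, hc⟩
  induction i using Fin.cases with
  | zero =>
      simp only [Phi, Fin.cases_zero]
      exact (continuous_apply q).comp ((continuous_apply _).comp continuous_subtype_val)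
  | succ p =>
      simp only [Phi, Fin.cases_succ]
      split_ifs with h
      · apply Real.continuousOn_log.comp_continuous
        · apply Continuous.sub
          · exact (continuous_apply q).comp ((continuous_apply _).comp continuous_subtype_val)
          · exact (continuous_apply q).comp ((continuous_apply _).comp continuous_subtype_val)
        · intro y
          simp only [Set.mem_compl_iff, Set.mem_singleton_iff]
          intro hzero
          have hlt : y.1 p.castSucc q < y.1 p.succ q := (y.2 p).2 q h
          have h0 : y.1 p.succ q - y.1 p.castSucc q = 0 := hzero
          linarith
      · exact (continuous_apply q).comp ((continuous_apply _).comp continuous_subtype_val)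

lemma continuous_Psi (i : Fin (k+1)) :
    ∀ q : Fin (l+1), Continuous fun f : Kset l a → ℝ => Psi l a f i q := by
  induction i using Fin.induction with
  | zero =>
      intro q
      simp only [Psi_zero]
      exact continuous_apply _
  | succ p ih =>
      intro q
      simp only [Psi_succ]
      split_ifs with h1 h2
      · exact ih q
      · exact (ih q).add (Real.continuous_exp.comp (continuous_apply _))
      · exact continuous_apply _

/-- The key homeomorphism between the set of configurations satisfying the consecutive
condition and the product of the free coordinates. -/
noncomputable def homeoQK : {y : Fin (k+1) → Fin (l+1) → ℝ // Q l a y} ≃ₜ (Kset l a → ℝ) where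
  toFun y := fun c => Phi l a y.1 c.1
  invFun f := ⟨Psi l a f, Q_Psi l a f⟩
  left_inv y := Subtype.ext (Psi_Phi l a y.2)
  right_inv f := Phi_Psi l a f
  continuous_toFun := continuous_PhiR l a
  continuous_invFun := by
    apply Continuous.subtype_mk
    apply continuous_pi
    intro i
    apply continuous_pi
    intro q
    exact continuous_Psi l a i q

lemma Kset_eq_compl : Kset l a = (Zset l a)ᶜ := by
  ext c
  simp only [Kset, Zset, Set.mem_setOf_eq, Set.mem_compl_iff, not_exists]
  constructor
  · intro h p ⟨hp1, hp2⟩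
    exact absurd (h p hp1) (by omega)
  · intro h p hp
    by_contra hcon
    exact h p ⟨hp, by omega⟩

lemma card_Zset (ha : ∀ p, a p ≤ l) [Fintype ↥(Zset l a)] :
    Fintype.card ↥(Zset l a) = ∑ p, a p := by
  classical
  have E : (Σ p : Fin k, Fin (a p)) ≃ ↥(Zset l a) := by
    refine Equiv.ofBijective
      (fun x => ⟨(x.1.succ, ⟨x.2.1, by have := ha x.1; omega⟩), ⟨x.1, rfl, x.2.2⟩⟩) ⟨?_, ?_⟩
    · rintro ⟨p, j⟩ ⟨p', j'⟩ h
      replace h := congrArg Subtype.val h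
      simp only [Subtype.mk.injEq, Prod.mk.injEq] at h
      obtain ⟨h1, h2⟩ := h
      obtain rfl : p = p' := Fin.succ_injective _ h1
      have : j = j' := Fin.ext (by simpa using congrArg Fin.val h2)
      subst this
      rfl
    · rintro ⟨⟨c1, c2⟩, ⟨p, hp1, hp2⟩⟩
      refine ⟨⟨p, ⟨c2.1, hp2⟩⟩, ?_⟩
      apply Subtype.ext
      simp only [Prod.mk.injEq]
      exact ⟨hp1.symm, by trivial⟩
  rw [← Fintype.card_congr E]
  simp

lemma card_Kset (ha : ∀ p, a p ≤ l) [Fintype ↥(Kset l a)] :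
    Fintype.card ↥(Kset l a) = (l+1) * (k+1) - ∑ p, a p := by
  classical
  rw [Fintype.card_congr (Equiv.setCongr (Kset_eq_compl l a))]
  rw [Fintype.card_compl_set, card_Zset l a ha]
  congr 1
  simp [mul_comm]

end Aux

/-- For `n, m ≥ 1` and a depth-ordering `(w; a)` with every `aₚ ≤ m - 1`,
the Fox-Neuwirth cell is homeomorphic (in its subspace topology) to the Euclidean space of
dimension `m·n - (a₁ + ⋯ + a_{n-1})`. -/
theorem cell_homeomorph_euclidean (n m : ℕ) (hn : 1 ≤ n) (hm : 1 ≤ m)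
    (w : Fin n → Fin n) (hw : Function.Bijective w)
    (a : Fin (n - 1) → ℕ) (ha : ∀ p, a p ≤ m - 1) :
    Nonempty (cell n m w a ≃ₜ (Fin (m * n - ∑ p, a p) → ℝ)) := by
  obtain ⟨k, rfl⟩ : ∃ k, n = k + 1 := ⟨n - 1, by omega⟩
  obtain ⟨l, rfl⟩ : ∃ l, m = l + 1 := ⟨m - 1, by omega⟩
  classical
  have ha' : ∀ p : Fin k, a p ≤ l := ha
  let σ : Fin (k+1) ≃ Fin (k+1) := Equiv.ofBijective w hw
  let e1 : cell (k+1) (l+1) w a ≃ₜ {y : Fin (k+1) → Fin (l+1) → ℝ // Q l a y} :=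
  { toFun := fun x => ⟨fun p => x.1.1 (w p), x.2⟩
    invFun := fun y => ⟨⟨fun i => y.1 (σ.symm i),
        (Q_injective l a ha' y.2).comp σ.symm.injective⟩, by
      show Q l a fun p => y.1 (σ.symm (w p))
      intro p
      have e1 : σ.symm (w p.castSucc) = p.castSucc := σ.symm_apply_apply _
      have e2 : σ.symm (w p.succ) = p.succ := σ.symm_apply_apply _
      constructor
      · intro q hq
        show y.1 (σ.symm (w p.castSucc)) q = y.1 (σ.symm (w p.succ)) q
        rw [e1, e2]
        exact (y.2 p).1 q hq
      · intro q hq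
        show y.1 (σ.symm (w p.castSucc)) q < y.1 (σ.symm (w p.succ)) q
        rw [e1, e2]
        exact (y.2 p).2 q hq⟩
    left_inv := fun x => Subtype.ext (Subtype.ext (funext fun i =>
      congrArg x.1.1 (σ.apply_symm_apply i)))
    right_inv := fun y => Subtype.ext (funext fun p =>
      congrArg y.1 (σ.symm_apply_apply p))
    continuous_toFun := by
      apply Continuous.subtype_mk
      apply continuous_pi
      intro p
      exact (continuous_apply (w p)).comp (continuous_subtype_val.comp continuous_subtype_val)
    continuous_invFun := by
      apply Continuous.subtype_mk
      apply Continuous.subtype_mk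
      apply continuous_pi
      intro i
      exact (continuous_apply (σ.symm i)).comp continuous_subtype_val }
  haveI : Fintype ↥(Kset l a) := Fintype.ofFinite _
  have hcard : Fintype.card ↥(Kset l a) = (l+1) * (k+1) - ∑ p, a p := card_Kset l a ha'
  exact ⟨e1.trans ((homeoQK l a).trans
    (Homeomorph.piCongrLeft (Y := fun _ : Fin ((l+1) * (k+1) - ∑ p, a p) => ℝ)
      (Fintype.equivFinOfCardEq hcard)))⟩

end FoxNeuwirth
end

section
/- Let n, m ≥ 1 and let Γ = (w; a_1,…,a_{n−1}) be a depth-ordering with a_p ≤ m−1 for all p. Every point of the closure of Conf_Γ(m) in Conf(n,m) that does not lie in Conf_Γ(m) itself lies in some Fox–Neuwirth cell Conf_{Γ'}(m) where Γ' = (w'; a'_1,…,a'_{n−1}) satisfies a'_1+⋯+a'_{n−1} > a_1+⋯+a_{n−1}; that is, the frontier of each cell is contained in the union of the cells of strictly smaller dimension. -/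
namespace FoxNeuwirth

/-! ### Auxiliary material -/

attribute [local instance] Classical.propDecidable

noncomputable instance piLexLO (m : ℕ) : LinearOrder (Lex (Fin m → ℝ)) :=
  @Pi.Lex.linearOrder (Fin m) (fun _ => ℝ) _ (Finite.to_wellFoundedLT) _

/-- First member of the `p`-th consecutive pair. -/
def i1 (n : ℕ) (p : Fin (n - 1)) : Fin n := ⟨p.1, lt_of_lt_of_le p.2 (Nat.sub_le n 1)⟩

/-- Second member of the `p`-th consecutive pair. -/
def i2 (n : ℕ) (p : Fin (n - 1)) : Fin n := ⟨p.1 + 1, by have := p.2; omega⟩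

lemma i1_ne_i2 (n : ℕ) (p : Fin (n - 1)) : i1 n p ≠ i2 n p := by
  intro h
  have := congrArg Fin.val h
  simp [i1, i2] at this

lemma i1_lt_i2 (n : ℕ) (p : Fin (n - 1)) : i1 n p < i2 n p := by
  simp [Fin.lt_def, i1, i2]

/-- `u` and `v` agree in their first `t` coordinates. -/
def agree (m t : ℕ) (u v : Fin m → ℝ) : Prop := ∀ q : Fin m, (q : ℕ) < t → u q = v q

/-- Truncation to the first `t` coordinates. -/
def trunc (m t : ℕ) (u : Fin m → ℝ) : Fin m → ℝ := fun q => if (q : ℕ) < t then u q else 0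

lemma trunc_eq_iff {m t : ℕ} {u v : Fin m → ℝ} :
    trunc m t u = trunc m t v ↔ agree m t u v := by
  constructor
  · intro h q hq
    have := congrFun h q
    simpa [trunc, hq] using this
  · intro h
    funext q
    by_cases hq : (q : ℕ) < t
    · simpa [trunc, hq] using h q hq
    · simp [trunc, hq]

/-- The depth of agreement of `u` and `v`: the largest `t ≤ m` such that `u` and `v` agree
in their first `t` coordinates. -/
noncomputable def dep (m : ℕ) (u v : Fin m → ℝ) : ℕ :=
  @Nat.findGreatest (fun t => agree m t u v) (Classical.decPred _) m

lemma dep_le (m : ℕ) (u v : Fin m → ℝ) : dep m u v ≤ m := Nat.findGreatest_le m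

lemma agree_dep (m : ℕ) (u v : Fin m → ℝ) : agree m (dep m u v) u v := by
  classical
  have h0 : agree m 0 u v := fun q hq => absurd hq (by omega)
  exact Nat.findGreatest_spec (P := fun t => agree m t u v) (Nat.zero_le m) h0

lemma le_dep {m t : ℕ} {u v : Fin m → ℝ} (ht : t ≤ m) (h : agree m t u v) :
    t ≤ dep m u v := Nat.le_findGreatest ht h

lemma agree_of_le_dep {m t : ℕ} {u v : Fin m → ℝ} (h : t ≤ dep m u v) :
    agree m t u v := fun q hq => agree_dep m u v q (lt_of_lt_of_le hq h)

lemma dep_lt {m : ℕ} {u v : Fin m → ℝ} (huv : u ≠ v) : dep m u v < m := by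
  rcases lt_or_eq_of_le (dep_le m u v) with h | h
  · exact h
  · exfalso
    apply huv
    funext q
    exact agree_of_le_dep h.ge q q.2

lemma dep_ne {m : ℕ} {u v : Fin m → ℝ} (huv : u ≠ v) :
    u ⟨dep m u v, dep_lt huv⟩ ≠ v ⟨dep m u v, dep_lt huv⟩ := by
  classical
  have hgr : ¬ agree m (dep m u v + 1) u v :=
    Nat.findGreatest_is_greatest (Nat.lt_succ_self _) (dep_lt huv)
  intro heq
  apply hgr
  intro q hq
  rcases Nat.lt_succ_iff_lt_or_eq.1 hq with hq' | hq'
  · exact agree_dep m u v q hq'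
  · have : q = (⟨dep m u v, dep_lt huv⟩ : Fin m) := Fin.ext hq'
    rw [this]; exact heq

/-- Any walk through the points of `Fin n` changes value at least `(number of values) - 1`
times. -/
lemma lemA {β : Type*} [DecidableEq β] {n : ℕ} (hn : 0 < n) (h : Fin n → β) :
    (Finset.image h Finset.univ).card ≤
      (Finset.univ.filter fun p : Fin (n - 1) => ¬ (h (i1 n p) = h (i2 n p))).card + 1 := by
  classical
  have hsub : Finset.image h Finset.univ ⊆
      insert (h ⟨0, hn⟩)
        ((Finset.univ.filter fun p : Fin (n - 1) => ¬ (h (i1 n p) = h (i2 n p))).image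
          fun p => h (i2 n p)) := by
    intro b hb
    rw [Finset.mem_image] at hb
    obtain ⟨i, -, rfl⟩ := hb
    have hex : ∃ k, ∃ hk : k < n, h ⟨k, hk⟩ = h i := ⟨i.1, i.2, by rw [Fin.eta]⟩
    obtain ⟨hk, hkh⟩ := Nat.find_spec hex
    rcases Nat.eq_zero_or_pos (Nat.find hex) with h0 | hpos
    · have : (⟨Nat.find hex, hk⟩ : Fin n) = ⟨0, hn⟩ := Fin.ext h0
      rw [← hkh, this]
      exact Finset.mem_insert_self _ _
    · have hk1 : Nat.find hex - 1 < n - 1 := by omega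
      set p : Fin (n - 1) := ⟨Nat.find hex - 1, hk1⟩ with hp
      have hi2 : i2 n p = ⟨Nat.find hex, hk⟩ := by
        apply Fin.ext; simp [i2, hp]; omega
      have hmem : p ∈ Finset.univ.filter
          fun p : Fin (n - 1) => ¬ (h (i1 n p) = h (i2 n p)) := by
        rw [Finset.mem_filter]
        refine ⟨Finset.mem_univ _, fun heq => ?_⟩
        have hfind : h (i1 n p) = h i := by rw [heq, hi2, hkh]
        have hlt : Nat.find hex - 1 < Nat.find hex := by omega
        exact Nat.find_min hex hlt ⟨by omega, hfind⟩
      apply Finset.mem_insert_of_mem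
      exact Finset.mem_image.2 ⟨p, hmem, by rw [hi2, hkh]⟩
  calc (Finset.image h Finset.univ).card ≤ _ := Finset.card_le_card hsub
    _ ≤ _ + 1 := Finset.card_insert_le _ _
    _ ≤ _ + 1 := Nat.add_le_add_right (Finset.card_image_le) 1

/-- If the level sets of `h` are convex (as for a lexicographically sorted family), a walk
changes value at most `(number of values) - 1` times. -/
lemma lemB {β : Type*} [DecidableEq β] {n : ℕ} (hn : 0 < n) (h : Fin n → β)
    (hconv : ∀ i j k : Fin n, i ≤ j → j ≤ k → h i = h k → h i = h j) :
    (Finset.univ.filter fun p : Fin (n - 1) => ¬ (h (i1 n p) = h (i2 n p))).card + 1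
      ≤ (Finset.image h Finset.univ).card := by
  classical
  set S := Finset.univ.filter fun p : Fin (n - 1) => ¬ (h (i1 n p) = h (i2 n p)) with hS
  have hmaps : ∀ p ∈ S, h (i2 n p) ∈ (Finset.image h Finset.univ).erase (h ⟨0, hn⟩) := by
    intro p hp
    rw [Finset.mem_erase]
    constructor
    · intro heq
      have h0le : (⟨0, hn⟩ : Fin n) ≤ i1 n p := by simp [Fin.le_def, i1]
      have h12 : i1 n p ≤ i2 n p := le_of_lt (i1_lt_i2 n p)
      have h01 := hconv ⟨0, hn⟩ (i1 n p) (i2 n p) h0le h12 heq.symm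
      exact (Finset.mem_filter.1 hp).2 (h01.symm.trans heq.symm)
    · exact Finset.mem_image.2 ⟨i2 n p, Finset.mem_univ _, rfl⟩
  have key : ∀ p p' : Fin (n - 1), p' ∈ S → p < p' → h (i2 n p) ≠ h (i2 n p') := by
    intro p p' hp' hlt heq
    have h1 : i2 n p ≤ i1 n p' := by
      have := Fin.lt_def.1 hlt
      simp [Fin.le_def, i1, i2]; omega
    have h2 : i1 n p' ≤ i2 n p' := le_of_lt (i1_lt_i2 n p')
    have hcv := hconv (i2 n p) (i1 n p') (i2 n p') h1 h2 heq
    exact (Finset.mem_filter.1 hp').2 (by rw [← hcv, heq])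
  have hinj : Set.InjOn (fun p => h (i2 n p)) S := by
    intro p hp p' hp' heq
    by_contra hne
    rcases lt_or_gt_of_ne hne with hlt | hlt
    · exact key p p' hp' hlt heq
    · exact key p' p hp hlt heq.symm
  have hcard : S.card ≤ ((Finset.image h Finset.univ).erase (h ⟨0, hn⟩)).card :=
    Finset.card_le_card_of_injOn _ hmaps hinj
  have hmem0 : h ⟨0, hn⟩ ∈ Finset.image h Finset.univ :=
    Finset.mem_image.2 ⟨⟨0, hn⟩, Finset.mem_univ _, rfl⟩
  have hpos : 1 ≤ (Finset.image h Finset.univ).card := Finset.card_pos.2 ⟨_, hmem0⟩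
  have := Finset.card_erase_of_mem hmem0
  omega

/-- Lexicographic convexity of agreement: if `u ≤ v ≤ w` lexicographically and `u, w` agree
to depth `t`, then so do `u, v`. -/
lemma agree_convex {m t : ℕ} {u v w : Fin m → ℝ} (huv : toLex u ≤ toLex v)
    (hvw : toLex v ≤ toLex w) (h : agree m t u w) : agree m t u v := by
  rcases huv.lt_or_eq with huv | huv
  swap
  · have : u = v := congrArg ofLex huv
    rw [this]; exact fun q hq => rfl
  rcases hvw.lt_or_eq with hvw | hvw
  swap
  · have : v = w := congrArg ofLex hvw
    rw [← this] at h; exact h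
  obtain ⟨i, hi1, hi2⟩ : ∃ i : Fin m, (∀ j, j < i → u j = v j) ∧ u i < v i := huv
  obtain ⟨i', hi1', hi2'⟩ : ∃ i : Fin m, (∀ j, j < i → v j = w j) ∧ v i < w i := hvw
  intro q hq
  rcases le_or_gt i i' with hii | hii
  · -- first difference of (u,v) comes no later; then t ≤ i
    have hti : t ≤ (i : ℕ) := by
      by_contra hti
      push_neg at hti
      have hvwi : v i ≤ w i := by
        rcases lt_or_eq_of_le hii with hii' | hii'
        · exact le_of_eq (hi1' i hii')
        · rw [hii']; exact le_of_lt hi2'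
      have : u i < w i := lt_of_lt_of_le hi2 hvwi
      rw [h i hti] at this
      exact lt_irrefl _ this
    exact hi1 q (by rw [Fin.lt_def]; omega)
  · have hti : t ≤ (i' : ℕ) := by
      by_contra hti
      push_neg at hti
      have : u i' = v i' := hi1 i' hii
      have huw : u i' < w i' := by rw [this]; exact hi2'
      rw [h i' hti] at huw
      exact lt_irrefl _ huw
    have : (i' : ℕ) < (i : ℕ) := hii
    exact hi1 q (by rw [Fin.lt_def]; omega)

/-- Double counting: the sum of the depths of consecutive pairs equals the sum over levels
of the number of pairs agreeing beyond that level. -/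
lemma sum_dep {n m : ℕ} (y : Fin n → Fin m → ℝ)
    (hy : ∀ p : Fin (n - 1), y (i1 n p) ≠ y (i2 n p)) :
    ∑ p : Fin (n - 1), dep m (y (i1 n p)) (y (i2 n p))
      = ∑ t ∈ Finset.range m,
          (Finset.univ.filter fun p : Fin (n - 1) =>
            agree m (t + 1) (y (i1 n p)) (y (i2 n p))).card := by
  classical
  have h1 : ∀ p : Fin (n - 1), dep m (y (i1 n p)) (y (i2 n p)) =
      ((Finset.range m).filter fun t => agree m (t + 1) (y (i1 n p)) (y (i2 n p))).card := by
    intro p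
    have hlt := dep_lt (hy p)
    have heq : ((Finset.range m).filter fun t => agree m (t + 1) (y (i1 n p)) (y (i2 n p)))
        = Finset.range (dep m (y (i1 n p)) (y (i2 n p))) := by
      ext t
      simp only [Finset.mem_filter, Finset.mem_range]
      constructor
      · rintro ⟨htm, hag⟩
        have := le_dep (by omega) hag
        omega
      · intro htd
        exact ⟨by omega, agree_of_le_dep (by omega)⟩
    rw [heq, Finset.card_range]
  calc ∑ p : Fin (n - 1), dep m (y (i1 n p)) (y (i2 n p))
      = ∑ p : Fin (n - 1),
          ((Finset.range m).filter fun t =>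
            agree m (t + 1) (y (i1 n p)) (y (i2 n p))).card :=
        Finset.sum_congr rfl fun p _ => h1 p
    _ = ∑ p : Fin (n - 1), ∑ t ∈ Finset.range m,
          if agree m (t + 1) (y (i1 n p)) (y (i2 n p)) then 1 else 0 := by
        refine Finset.sum_congr rfl fun p _ => ?_
        rw [Finset.card_filter]
    _ = ∑ t ∈ Finset.range m, ∑ p : Fin (n - 1),
          if agree m (t + 1) (y (i1 n p)) (y (i2 n p)) then 1 else 0 := Finset.sum_comm
    _ = _ := by
        refine Finset.sum_congr rfl fun t _ => ?_
        rw [Finset.card_filter]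

/-- Key counting inequality: a lexicographically convex ordering has at least as many
agreeing consecutive pairs at each level as any other ordering. -/
lemma card_agree_le {n m t : ℕ} (P : Fin n → Fin m → ℝ)
    (w σ : Fin n → Fin n) (hw : Function.Surjective w) (hσ : Function.Surjective σ)
    (hconv : ∀ i j k : Fin n, i ≤ j → j ≤ k →
      agree m t (P (σ i)) (P (σ k)) → agree m t (P (σ i)) (P (σ j))) :
    (Finset.univ.filter fun p : Fin (n - 1) =>
        agree m t (P (w (i1 n p))) (P (w (i2 n p)))).card ≤
      (Finset.univ.filter fun p : Fin (n - 1) =>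
        agree m t (P (σ (i1 n p))) (P (σ (i2 n p)))).card := by
  classical
  rcases Nat.eq_zero_or_pos n with rfl | hn
  · simp
  set hW : Fin n → (Fin m → ℝ) := fun i => trunc m t (P (w i)) with hWdef
  set hSf : Fin n → (Fin m → ℝ) := fun i => trunc m t (P (σ i)) with hSdef
  have rW : (Finset.univ.filter fun p : Fin (n - 1) =>
      agree m t (P (w (i1 n p))) (P (w (i2 n p))))
      = Finset.univ.filter fun p => hW (i1 n p) = hW (i2 n p) :=
    Finset.filter_congr fun p _ => trunc_eq_iff.symm
  have rS : (Finset.univ.filter fun p : Fin (n - 1) =>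
      agree m t (P (σ (i1 n p))) (P (σ (i2 n p))))
      = Finset.univ.filter fun p => hSf (i1 n p) = hSf (i2 n p) :=
    Finset.filter_congr fun p _ => trunc_eq_iff.symm
  rw [rW, rS]
  have hcomp1 : (Finset.univ.filter fun p : Fin (n - 1) =>
        hW (i1 n p) = hW (i2 n p)).card +
      (Finset.univ.filter fun p : Fin (n - 1) => ¬ (hW (i1 n p) = hW (i2 n p))).card
      = n - 1 := by
    have := Finset.card_filter_add_card_filter_not
      (s := (Finset.univ : Finset (Fin (n - 1))))
      (p := fun p => hW (i1 n p) = hW (i2 n p))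
    simpa using this
  have hcomp2 : (Finset.univ.filter fun p : Fin (n - 1) =>
        hSf (i1 n p) = hSf (i2 n p)).card +
      (Finset.univ.filter fun p : Fin (n - 1) => ¬ (hSf (i1 n p) = hSf (i2 n p))).card
      = n - 1 := by
    have := Finset.card_filter_add_card_filter_not
      (s := (Finset.univ : Finset (Fin (n - 1))))
      (p := fun p => hSf (i1 n p) = hSf (i2 n p))
    simpa using this
  have himg : Finset.image hW Finset.univ = Finset.image hSf Finset.univ := by
    have e1 : Finset.image hW Finset.univ
        = Finset.image (fun i => trunc m t (P i)) Finset.univ := by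
      rw [hWdef, show (fun i => trunc m t (P (w i)))
          = (fun i => trunc m t (P i)) ∘ w from rfl, ← Finset.image_image,
        Finset.image_univ_of_surjective hw]
    have e2 : Finset.image hSf Finset.univ
        = Finset.image (fun i => trunc m t (P i)) Finset.univ := by
      rw [hSdef, show (fun i => trunc m t (P (σ i)))
          = (fun i => trunc m t (P i)) ∘ σ from rfl, ← Finset.image_image,
        Finset.image_univ_of_surjective hσ]
    rw [e1, e2]
  have hA : (Finset.image hW Finset.univ).card ≤
      (Finset.univ.filter fun p : Fin (n - 1) =>
        ¬ (hW (i1 n p) = hW (i2 n p))).card + 1 := lemA hn hW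
  have hB : (Finset.univ.filter fun p : Fin (n - 1) =>
        ¬ (hSf (i1 n p) = hSf (i2 n p))).card + 1
      ≤ (Finset.image hSf Finset.univ).card := lemB hn hSf (by
    intro i j k hij hjk hik
    have h1 : agree m t (P (σ i)) (P (σ k)) := trunc_eq_iff.1 hik
    exact trunc_eq_iff.2 (hconv i j k hij hjk h1))
  have hcardimg : (Finset.image hW Finset.univ).card
      = (Finset.image hSf Finset.univ).card := by rw [himg]
  omega

lemma isClosed_imp {α : Type*} [TopologicalSpace α] (c : Prop) {s : Set α}
    (hs : IsClosed s) : IsClosed {x | c → x ∈ s} := by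
  by_cases h : c
  · have : {x | c → x ∈ s} = s := by ext x; simp [h]
    rw [this]; exact hs
  · have : {x | c → x ∈ s} = Set.univ := by ext x; simp [h]
    rw [this]; exact isClosed_univ

/-- For `n, m ≥ 1` and a depth-ordering `(w; a)` with all `aₚ ≤ m - 1`,
every point of the closure of the cell `Conf_Γ(m)` in `Conf(n,m)` not lying in the cell
itself lies in some Fox-Neuwirth cell whose labels have strictly larger sum; that is, the
frontier of each cell is contained in the union of the cells of strictly smaller dimension. -/
theorem cell_frontier_in_smaller_cells (n m : ℕ) (hn : 1 ≤ n) (hm : 1 ≤ m)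
    (w : Fin n → Fin n) (hw : Function.Bijective w)
    (a : Fin (n - 1) → ℕ) (ha : ∀ p, a p ≤ m - 1)
    (x : Conf n m) (hx : x ∈ closure (cell n m w a)) (hx' : x ∉ cell n m w a) :
    ∃ (w' : Fin n → Fin n) (a' : Fin (n - 1) → ℕ),
      Function.Bijective w' ∧ (∑ p, a p) < (∑ p, a' p) ∧ x ∈ cell n m w' a' := by
  classical
  set P : Fin n → (Fin m → ℝ) := x.1 with hPdef
  -- Step 1: pass to the closed superset of the cell.
  have hc : ∀ (i : Fin n) (q : Fin m), Continuous fun y : Conf n m => y.1 i q :=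
    fun i q => (continuous_apply q).comp ((continuous_apply i).comp continuous_subtype_val)
  set C : Set (Conf n m) := ⋂ (p : Fin (n - 1)), ⋂ (q : Fin m),
      ({y : Conf n m | (q : ℕ) < a p → y.1 (w (i1 n p)) q = y.1 (w (i2 n p)) q} ∩
       {y : Conf n m | (q : ℕ) = a p → y.1 (w (i1 n p)) q ≤ y.1 (w (i2 n p)) q}) with hCdef
  have hCclosed : IsClosed C := by
    refine isClosed_iInter fun p => isClosed_iInter fun q => IsClosed.inter ?_ ?_
    · exact isClosed_imp _ (isClosed_eq (hc _ _) (hc _ _))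
    · exact isClosed_imp _ (isClosed_le (hc _ _) (hc _ _))
  have hsub : cell n m w a ⊆ C := by
    intro y hy
    simp only [hCdef, Set.mem_iInter, Set.mem_inter_iff, Set.mem_setOf_eq]
    intro p q
    exact ⟨fun hq => (hy p).1 q hq, fun hq => le_of_lt ((hy p).2 q hq)⟩
  have hxC := closure_minimal hsub hCclosed hx
  simp only [hCdef, Set.mem_iInter, Set.mem_inter_iff, Set.mem_setOf_eq] at hxC
  have hEq : ∀ (p : Fin (n - 1)) (q : Fin m), (q : ℕ) < a p →
      P (w (i1 n p)) q = P (w (i2 n p)) q := fun p q hq => (hxC p q).1 hq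
  have hLe : ∀ (p : Fin (n - 1)) (q : Fin m), (q : ℕ) = a p →
      P (w (i1 n p)) q ≤ P (w (i2 n p)) q := fun p q hq => (hxC p q).2 hq
  -- Step 2: find the defective index p0, where equality holds at coordinate a p0.
  have hx'' : ∃ p : Fin (n - 1), ¬ ((∀ q : Fin m, (q : ℕ) < a p →
        P (w (i1 n p)) q = P (w (i2 n p)) q) ∧
      (∀ q : Fin m, (q : ℕ) = a p → P (w (i1 n p)) q < P (w (i2 n p)) q)) := by
    by_contra hcon
    push_neg at hcon
    exact hx' fun p => hcon p
  obtain ⟨p0, hp0⟩ := hx''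
  have hp0' : ∃ q : Fin m, (q : ℕ) = a p0 ∧
      ¬ (P (w (i1 n p0)) q < P (w (i2 n p0)) q) := by
    by_contra hcon
    push_neg at hcon
    exact hp0 ⟨fun q hq => hEq p0 q hq, fun q hq => hcon q hq⟩
  obtain ⟨q0, hq0, hq0lt⟩ := hp0'
  have hq0eq : P (w (i1 n p0)) q0 = P (w (i2 n p0)) q0 :=
    le_antisymm (hLe p0 q0 hq0) (not_lt.1 hq0lt)
  -- distinctness of consecutive pairs
  have hwpair : ∀ p : Fin (n - 1), P (w (i1 n p)) ≠ P (w (i2 n p)) := by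
    intro p h
    exact i1_ne_i2 n p (hw.injective (x.2 h))
  -- Step 3: the depths of the `w`-consecutive pairs dominate `a` with one strict.
  set c : Fin (n - 1) → ℕ := fun p => dep m (P (w (i1 n p))) (P (w (i2 n p))) with hcdef
  have hac : ∀ p, a p ≤ c p := by
    intro p
    refine le_dep (by have := ha p; omega) ?_
    intro q hq
    exact hEq p q hq
  have hstrict : a p0 + 1 ≤ c p0 := by
    refine le_dep (by have := ha p0; omega) ?_
    intro q hq
    rcases Nat.lt_succ_iff_lt_or_eq.1 hq with hq' | hq'
    · exact hEq p0 q hq'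
    · have : q = q0 := Fin.ext (by omega)
      rw [this]; exact hq0eq
  have hsum1 : (∑ p, a p) < ∑ p, c p :=
    Finset.sum_lt_sum (fun p _ => hac p) ⟨p0, Finset.mem_univ _, by omega⟩
  -- Step 4: lexicographic sorting.
  set f : Fin n → Lex (Fin m → ℝ) := fun i => toLex (P i) with hfdef
  set σ : Equiv.Perm (Fin n) := Tuple.sort f with hσdef
  have hmono : Monotone (f ∘ σ) := Tuple.monotone_sort f
  have hfinj : Function.Injective f := fun i j h => x.2 (congrArg ofLex h)
  have hsm : StrictMono (f ∘ σ) :=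
    hmono.strictMono_of_injective (hfinj.comp σ.injective)
  have hσpair : ∀ p : Fin (n - 1), P (σ (i1 n p)) ≠ P (σ (i2 n p)) := by
    intro p h
    exact i1_ne_i2 n p (σ.injective (x.2 h))
  set a' : Fin (n - 1) → ℕ := fun p => dep m (P (σ (i1 n p))) (P (σ (i2 n p))) with ha'def
  -- Step 5: sum comparison via double counting.
  have hsum2 : (∑ p, c p) ≤ ∑ p, a' p := by
    simp only [hcdef, ha'def]
    rw [sum_dep (fun i => P (w i)) hwpair, sum_dep (fun i => P (σ i)) hσpair]
    refine Finset.sum_le_sum fun t _ => ?_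
    refine card_agree_le P w σ hw.surjective σ.surjective ?_
    intro i j k hij hjk hik
    have h1 : toLex (P (σ i)) ≤ toLex (P (σ j)) := hmono hij
    have h2 : toLex (P (σ j)) ≤ toLex (P (σ k)) := hmono hjk
    exact agree_convex h1 h2 hik
  -- Step 6: x lies in the cell of (σ, a').
  refine ⟨⇑σ, a', σ.bijective, by omega, ?_⟩
  intro p
  constructor
  · intro q hq
    exact agree_dep m (P (σ (i1 n p))) (P (σ (i2 n p))) q hq
  · intro q hq
    have hlt : toLex (P (σ (i1 n p))) < toLex (P (σ (i2 n p))) := hsm (i1_lt_i2 n p)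
    obtain ⟨i, hi1, hi2⟩ : ∃ i : Fin m, (∀ j, j < i →
        P (σ (i1 n p)) j = P (σ (i2 n p)) j) ∧
        P (σ (i1 n p)) i < P (σ (i2 n p)) i := hlt
    have hδ : dep m (P (σ (i1 n p))) (P (σ (i2 n p))) < m := dep_lt (hσpair p)
    rcases lt_trichotomy (i : ℕ) (a' p) with hcase | hcase | hcase
    · exact absurd (agree_dep m _ _ i hcase) (ne_of_lt hi2)
    · have : q = i := Fin.ext (by omega)
      rw [this]; exact hi2
    · exfalso
      apply dep_ne (hσpair p)
      exact hi1 ⟨dep m (P (σ (i1 n p))) (P (σ (i2 n p))), hδ⟩ (by rw [Fin.lt_def]; exact hcase)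

end FoxNeuwirth
end

section
/- Let n, m ≥ 1, let Γ = (w; a_1,…,a_{n−1}) be a depth-ordering with a_p ≤ m−1 for all p, and fix 1 ≤ q ≤ n−1 with a_q + 1 ≤ m−1. Let Γ' = (w; a_1,…,a_{q−1}, a_q+1, a_{q+1},…,a_{n−1}) be the depth-ordering obtained by increasing the q-th inequality label by one while keeping the same ordering of the points. Then Conf_{Γ'}(m) is contained in the closure of Conf_Γ(m) in Conf(n,m). -/
namespace FoxNeuwirth

/-- Strict lexicographic comparison on `Fin m → ℝ`. -/
def ltLex {m : ℕ} (u v : Fin m → ℝ) : Prop :=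
  ∃ k : Fin m, (∀ l : Fin m, l < k → u l = v l) ∧ u k < v k

lemma ltLex_trans {m : ℕ} {u v w : Fin m → ℝ} (h1 : ltLex u v) (h2 : ltLex v w) :
    ltLex u w := by
  obtain ⟨k1, he1, hl1⟩ := h1
  obtain ⟨k2, he2, hl2⟩ := h2
  refine ⟨min k1 k2, fun l hl => ?_, ?_⟩
  · rw [he1 l (lt_of_lt_of_le hl (min_le_left _ _)),
      he2 l (lt_of_lt_of_le hl (min_le_right _ _))]
  · rcases lt_trichotomy k1 k2 with h | h | h
    · rw [min_eq_left h.le]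
      calc u k1 < v k1 := hl1
        _ = w k1 := he2 k1 h
    · subst h
      rw [min_self]
      exact hl1.trans hl2
    · rw [min_eq_right h.le]
      calc u k2 = v k2 := he1 k2 h
        _ < w k2 := hl2

lemma ltLex_ne {m : ℕ} {u v : Fin m → ℝ} (h : ltLex u v) : u ≠ v := by
  obtain ⟨k, -, hk⟩ := h
  intro he
  rw [he] at hk
  exact lt_irrefl _ hk

/-- Any map satisfying the Fox–Neuwirth cell inequalities is injective. -/
lemma inj_of_cell_cond (n m : ℕ) (hm : 1 ≤ m) (w : Fin n → Fin n)
    (hw : Function.Bijective w) (a : Fin (n - 1) → ℕ) (ha : ∀ p, a p ≤ m - 1)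
    (y : Fin n → Fin m → ℝ)
    (h : ∀ p : Fin (n - 1),
      (∀ k : Fin m, (k : ℕ) < a p →
          y (w ⟨p.1, lt_of_lt_of_le p.2 (Nat.sub_le n 1)⟩) k
            = y (w ⟨p.1 + 1, by have := p.2; omega⟩) k) ∧
      (∀ k : Fin m, (k : ℕ) = a p →
          y (w ⟨p.1, lt_of_lt_of_le p.2 (Nat.sub_le n 1)⟩) k
            < y (w ⟨p.1 + 1, by have := p.2; omega⟩) k)) :
    Function.Injective y := by
  have chain : ∀ j i : ℕ, ∀ hj : j < n, ∀ hi : i < n, i < j →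
      ltLex (y (w ⟨i, hi⟩)) (y (w ⟨j, hj⟩)) := by
    intro j
    induction j with
    | zero => intro i hj hi hij; omega
    | succ j ih =>
      intro i hj hi hij
      have hjn : j < n := by omega
      have hp : j < n - 1 := by omega
      have hap : a ⟨j, hp⟩ < m := by have := ha ⟨j, hp⟩; omega
      have step : ltLex (y (w ⟨j, hjn⟩)) (y (w ⟨j + 1, hj⟩)) := by
        obtain ⟨he, hs⟩ := h ⟨j, hp⟩
        exact ⟨⟨a ⟨j, hp⟩, hap⟩, fun l hl => he l hl, hs _ rfl⟩
      rcases eq_or_lt_of_le (Nat.lt_succ_iff.mp hij) with h' | h'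
      · subst h'
        exact step
      · exact ltLex_trans (ih i hjn hi h') step
  intro i j hij
  by_contra hne
  set σ := Equiv.ofBijective w hw with hσ
  have hwi : w (σ.symm i) = i := σ.apply_symm_apply i
  have hwj : w (σ.symm j) = j := σ.apply_symm_apply j
  have hne' : σ.symm i ≠ σ.symm j := fun h' => hne (by rw [← hwi, ← hwj, h'])
  rcases lt_or_gt_of_ne (fun h' : (σ.symm i : ℕ) = (σ.symm j : ℕ) =>
      hne' (Fin.ext h')) with h' | h'
  · have := chain (σ.symm j) (σ.symm i) (σ.symm j).2 (σ.symm i).2 h'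
    rw [Fin.eta, Fin.eta, hwi, hwj] at this
    exact ltLex_ne this hij
  · have := chain (σ.symm i) (σ.symm j) (σ.symm i).2 (σ.symm j).2 h'
    rw [Fin.eta, Fin.eta, hwi, hwj] at this
    exact ltLex_ne this hij.symm

/-- For `n, m ≥ 1`, a depth-ordering `(w; a)` with all `aₚ ≤ m - 1`, and an
index `q` with `a q + 1 ≤ m - 1`, the cell of the depth-ordering obtained by increasing the
`q`-th inequality label by one (keeping the same ordering of the points) is contained in the
closure of the cell of `(w; a)` in `Conf(n,m)`. -/
theorem increment_cell_subset_closure (n m : ℕ) (hn : 1 ≤ n) (hm : 1 ≤ m)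
    (w : Fin n → Fin n) (hw : Function.Bijective w)
    (a : Fin (n - 1) → ℕ) (ha : ∀ p, a p ≤ m - 1)
    (q : Fin (n - 1)) (hq : a q + 1 ≤ m - 1) :
    cell n m w (Function.update a q (a q + 1)) ⊆ closure (cell n m w a) := by
  intro x hx
  set σ := Equiv.ofBijective w hw with hσ
  have hsymm : ∀ v : Fin n, σ.symm (w v) = v := fun v => σ.symm_apply_apply v
  -- the perturbed family of configurations
  set f : ℕ → Fin n → Fin m → ℝ := fun t i k =>
    x.1 i k + (if (k : ℕ) = a q ∧ q.1 < (σ.symm i : ℕ) then ((t : ℝ) + 1)⁻¹ else 0)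
    with hf
  have htpos : ∀ t : ℕ, (0 : ℝ) < ((t : ℝ) + 1)⁻¹ := fun t => by positivity
  -- f t satisfies the cell conditions for a
  have hcond : ∀ t : ℕ, ∀ p : Fin (n - 1),
      (∀ k : Fin m, (k : ℕ) < a p →
          f t (w ⟨p.1, lt_of_lt_of_le p.2 (Nat.sub_le n 1)⟩) k
            = f t (w ⟨p.1 + 1, by have := p.2; omega⟩) k) ∧
      (∀ k : Fin m, (k : ℕ) = a p →
          f t (w ⟨p.1, lt_of_lt_of_le p.2 (Nat.sub_le n 1)⟩) k
            < f t (w ⟨p.1 + 1, by have := p.2; omega⟩) k) := by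
    intro t p
    obtain ⟨hxe, hxs⟩ := hx p
    have hupd : Function.update a q (a q + 1) p = if p = q then a q + 1 else a p := by
      simp [Function.update_apply]
    simp only [hf, hsymm]
    by_cases hpq : p = q
    · subst hpq
      rw [hupd, if_pos rfl] at hxe hxs
      constructor
      · intro k hk
        have h1 : ¬ ((k : ℕ) = a p ∧ p.1 < p.1) := by omega
        have h2 : ¬ ((k : ℕ) = a p ∧ p.1 < p.1 + 1) := by omega
        rw [if_neg h1, if_neg h2, add_zero, add_zero]
        exact hxe k (by omega)
      · intro k hk
        have h1 : ¬ ((k : ℕ) = a p ∧ p.1 < p.1) := by omega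
        have h2 : ((k : ℕ) = a p ∧ p.1 < p.1 + 1) := by omega
        rw [if_neg h1, if_pos h2, add_zero]
        have := hxe k (by omega)
        rw [this]
        exact lt_add_of_pos_right _ (htpos t)
    · have hne : p.1 ≠ q.1 := fun h' => hpq (Fin.ext h')
      rw [hupd, if_neg hpq] at hxe hxs
      have hiff : ∀ k : Fin m, ((k : ℕ) = a q ∧ q.1 < p.1) ↔
          ((k : ℕ) = a q ∧ q.1 < p.1 + 1) := by
        intro k; omega
      constructor
      · intro k hk
        rw [if_congr (hiff k) rfl rfl, hxe k hk]
      · intro k hk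
        rw [if_congr (hiff k) rfl rfl]
        exact add_lt_add_left (hxs k hk) _
  have hinj : ∀ t, Function.Injective (f t) := fun t =>
    inj_of_cell_cond n m hm w hw a ha (f t) (hcond t)
  have hmem : ∀ t, (⟨f t, hinj t⟩ : Conf n m) ∈ cell n m w a := fun t => hcond t
  refine mem_closure_of_tendsto (b := Filter.atTop) (f := fun t : ℕ => (⟨f t, hinj t⟩ : Conf n m))
    ?_ (Filter.Eventually.of_forall hmem)
  rw [tendsto_subtype_rng]
  rw [tendsto_pi_nhds]
  intro i
  rw [tendsto_pi_nhds]
  intro k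
  simp only [hf]
  by_cases hc : (k : ℕ) = a q ∧ q.1 < (σ.symm i : ℕ)
  · simp only [if_pos hc]
    have h0 : Filter.Tendsto (fun t : ℕ => ((t : ℝ) + 1)⁻¹) Filter.atTop (nhds 0) := by
      simpa only [one_div] using (tendsto_one_div_add_atTop_nhds_zero_nat (𝕜 := ℝ))
    simpa using tendsto_const_nhds.add h0
  · simp only [if_neg hc, add_zero]
    exact tendsto_const_nhds


end FoxNeuwirth
end

section
/- Let n ≥ 1 and m ≥ 2. The configuration space Conf(n,m) of n distinct labeled points in ℝ^m is path-connected when m ≥ 2, and more generally it is (m−2)-connected: for every k with 1 ≤ k ≤ m−2 and every basepoint, the k-th homotopy group of Conf(n,m) is trivial. -/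
open scoped unitInterval Topology ENNReal NNReal
open MeasureTheory

noncomputable section

namespace FoxNeuwirth

lemma exists_lipschitz_smul {α V : Type*} [PseudoMetricSpace α] [NormedAddCommGroup V]
    [NormedSpace ℝ V] {c : α → ℝ} {v : α → V} {Kc Kv : ℝ≥0} {Mc Mv : ℝ}
    (hc : LipschitzWith Kc c) (hv : LipschitzWith Kv v)
    (hMc : ∀ a, |c a| ≤ Mc) (hMv : ∀ a, ‖v a‖ ≤ Mv) :
    ∃ K : ℝ≥0, LipschitzWith K (fun a => c a • v a) := by
  refine ⟨Mc.toNNReal * Kv + Kc * Mv.toNNReal, LipschitzWith.of_dist_le_mul fun a b => ?_⟩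
  have key : c a • v a - c b • v b = c a • (v a - v b) + (c a - c b) • v b := by
    rw [smul_sub, sub_smul]; abel
  have h1 : dist (c a • v a) (c b • v b) ≤ |c a| * ‖v a - v b‖ + |c a - c b| * ‖v b‖ := by
    rw [dist_eq_norm, key]
    calc ‖c a • (v a - v b) + (c a - c b) • v b‖
        ≤ ‖c a • (v a - v b)‖ + ‖(c a - c b) • v b‖ := norm_add_le _ _
      _ = |c a| * ‖v a - v b‖ + |c a - c b| * ‖v b‖ := by
          rw [norm_smul, norm_smul, Real.norm_eq_abs, Real.norm_eq_abs]
  have h2 : ‖v a - v b‖ ≤ Kv * dist a b := by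
    simpa [dist_eq_norm] using hv.dist_le_mul a b
  have h3 : |c a - c b| ≤ Kc * dist a b := by
    simpa [Real.dist_eq] using hc.dist_le_mul a b
  have hMc0 : 0 ≤ Mc := le_trans (abs_nonneg _) (hMc a)
  have hMv0 : 0 ≤ Mv := le_trans (norm_nonneg _) (hMv b)
  have hcoe : ((Mc.toNNReal * Kv + Kc * Mv.toNNReal : ℝ≥0) : ℝ) = Mc * Kv + Kc * Mv := by
    push_cast [Real.coe_toNNReal _ hMc0, Real.coe_toNNReal _ hMv0]; ring
  rw [hcoe]
  have hca := hMc a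
  have hvb := hMv b
  have d0 : (0:ℝ) ≤ dist a b := dist_nonneg
  nlinarith [abs_nonneg (c a), norm_nonneg (v b), abs_nonneg (c a - c b), norm_nonneg (v a - v b),
    mul_le_mul_of_nonneg_right hca (le_trans (norm_nonneg _) h2),
    NNReal.coe_nonneg Kv, NNReal.coe_nonneg Kc]

lemma bound_of_continuous {X : Type*} [TopologicalSpace X] [CompactSpace X] [Nonempty X]
    (u : X → ℝ) (hu : Continuous u) : ∃ C : ℝ, ∀ x, u x ≤ C := by
  obtain ⟨z, hz⟩ := hu.exists_forall_ge (by
    have : Filter.cocompact X = ⊥ := Filter.cocompact_eq_bot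
    simp [this])
  exact ⟨u z, hz⟩

lemma hyperplane_null {m : ℕ} (q : Fin m) : volume {z : Fin m → ℝ | z q = 0} = 0 := by
  have : {z : Fin m → ℝ | z q = 0} = (LinearMap.ker (LinearMap.proj (R := ℝ) (φ := fun _ : Fin m => ℝ) q) : Set (Fin m → ℝ)) := by
    ext z; simp [LinearMap.mem_ker]
  rw [this]
  refine Measure.addHaar_submodule volume _ fun h => ?_
  have h1 : (fun j : Fin m => if j = q then (1:ℝ) else 0) ∈ LinearMap.ker (LinearMap.proj (R := ℝ) (φ := fun _ : Fin m => ℝ) q) := h ▸ Submodule.mem_top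
  simp [LinearMap.mem_ker] at h1

lemma volume_image_null {m : ℕ} (hm : 1 ≤ m) {F : (Fin m → ℝ) → (Fin m → ℝ)}
    {S : Set (Fin m → ℝ)} (K : ℝ≥0) (hF : LipschitzOnWith K F S) (hS : volume S = 0) :
    volume (F '' S) = 0 := by
  have : Nonempty (Fin m) := ⟨⟨0, hm⟩⟩
  have hH : (μH[(m:ℝ)] : Measure (Fin m → ℝ)) = volume := by
    simpa using MeasureTheory.hausdorffMeasure_pi_real (ι := Fin m)
  have h2 := hF.hausdorffMeasure_image_le (show (0:ℝ) ≤ (m:ℝ) by positivity)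
  rw [hH, hS, mul_zero] at h2
  exact le_antisymm h2 (zero_le)

/-- clamp a real to `[-N, N]` -/
def clampR (N : ℕ) (r : ℝ) : ℝ := max (-(N:ℝ)) (min (N:ℝ) r)

lemma clampR_lipschitz (N : ℕ) : LipschitzWith 1 (clampR N) := by
  refine LipschitzWith.of_dist_le_mul fun a b => ?_
  rw [Real.dist_eq, Real.dist_eq, NNReal.coe_one, one_mul]
  unfold clampR
  calc |max (-(N:ℝ)) (min (N:ℝ) a) - max (-(N:ℝ)) (min (N:ℝ) b)|
      = |max (min (N:ℝ) a) (-(N:ℝ)) - max (min (N:ℝ) b) (-(N:ℝ))| := by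
        rw [max_comm, max_comm (-(N:ℝ))]
    _ ≤ |min (N:ℝ) a - min (N:ℝ) b| := abs_max_sub_max_le_abs _ _ _
    _ ≤ max |(N:ℝ) - (N:ℝ)| |a - b| := abs_min_sub_min_le_max _ _ _ _
    _ ≤ |a - b| := by simp

lemma clampR_abs_le (N : ℕ) (r : ℝ) : |clampR N r| ≤ N := by
  unfold clampR
  rw [abs_le]
  exact ⟨le_max_left _ _, max_le (by simp) (min_le_left _ _)⟩

lemma clampR_eq_self {N : ℕ} {r : ℝ} (h : |r| ≤ N) : clampR N r = r := by
  rw [abs_le] at h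
  unfold clampR
  rw [min_eq_right h.2, max_eq_right h.1]

/-- clamp a vector into the unit cube -/
def clampCube {k : ℕ} (w : Fin k → ℝ) : I^(Fin k) :=
  fun q => Set.projIcc 0 1 zero_le_one (w q)

lemma clampCube_lipschitz {k : ℕ} : LipschitzWith 1 (clampCube (k := k)) := by
  refine LipschitzWith.of_dist_le_mul fun a b => ?_
  rw [NNReal.coe_one, one_mul]
  refine (dist_pi_le_iff dist_nonneg).2 fun q => ?_
  calc dist (clampCube a q) (clampCube b q)
      ≤ dist (a q) (b q) := by
        have := (LipschitzWith.projIcc (h := zero_le_one.trans (le_refl (1:ℝ)))).dist_le_mul (a q) (b q)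
        simpa [clampCube] using this
    _ ≤ dist a b := dist_le_pi_dist a b q

lemma clampCube_coe {k : ℕ} (y : I^(Fin k)) : clampCube (fun q => (y q : ℝ)) = y := by
  funext q
  simp [clampCube]

/-- the tail coordinates -/
def tailmap {m k : ℕ} (hkm : k + 2 ≤ m) (z : Fin m → ℝ) : Fin k → ℝ :=
  fun q => z ⟨q.1 + 1, by omega⟩

lemma tailmap_lipschitz {m k : ℕ} (hkm : k + 2 ≤ m) : LipschitzWith 1 (tailmap hkm) := by
  refine LipschitzWith.of_dist_le_mul fun a b => ?_
  rw [NNReal.coe_one, one_mul]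
  exact (dist_pi_le_iff dist_nonneg).2 fun q => dist_le_pi_dist a b _

/-- The "bad cone" of directions hitting a difference of two coordinates of `G`. -/
def coneSet {n m k : ℕ} (G : (I^(Fin k)) → Fin n → Fin m → ℝ) : Set (Fin m → ℝ) :=
  {v | ∃ (s : ℝ) (y : I^(Fin k)) (i j : Fin n), v = s • (G y i - G y j)}

lemma cone_null {n m k : ℕ} (hkm : k + 2 ≤ m)
    (G : (I^(Fin k)) → Fin n → Fin m → ℝ) (hG : ∃ K, LipschitzWith K G) :
    volume (coneSet G) = 0 := by
  obtain ⟨KG, hKG⟩ := hG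
  have hm : 2 ≤ m := by omega
  set S : Set (Fin m → ℝ) := {z | z ⟨m-1, by omega⟩ = 0} with hSdef
  have hSnull : volume S = 0 := hyperplane_null _
  set h : Fin n → Fin n → ℕ → (Fin m → ℝ) → (Fin m → ℝ) := fun i j N z =>
    clampR N (z ⟨0, by omega⟩) • (G (clampCube (tailmap hkm z)) i - G (clampCube (tailmap hkm z)) j)
    with hdef
  have hsub : coneSet G ⊆ ⋃ (i : Fin n) (j : Fin n) (N : ℕ), h i j N '' S := by
    rintro v ⟨s, y, i, j, rfl⟩
    refine Set.mem_iUnion.2 ⟨i, Set.mem_iUnion.2 ⟨j, Set.mem_iUnion.2 ⟨⌈|s|⌉₊, ?_⟩⟩⟩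
    set z : Fin m → ℝ := fun q => if q.1 = 0 then s else if h2 : q.1 - 1 < k then (y ⟨q.1 - 1, h2⟩ : ℝ) else 0 with hzdef
    have hz0 : z ⟨0, by omega⟩ = s := by
      rw [hzdef]; simp
    have hzlast : z ⟨m - 1, by omega⟩ = 0 := by
      rw [hzdef]
      simp only []
      rw [if_neg (by omega), dif_neg (by omega)]
    have htail : tailmap hkm z = fun q : Fin k => (y q : ℝ) := by
      funext q
      rw [hzdef]
      show (if ((⟨q.1 + 1, by omega⟩ : Fin m) : ℕ) = 0 then s
        else if h2 : ((⟨q.1 + 1, by omega⟩ : Fin m) : ℕ) - 1 < k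
          then (y ⟨((⟨q.1 + 1, by omega⟩ : Fin m) : ℕ) - 1, h2⟩ : ℝ) else 0) = (y q : ℝ)
      rw [if_neg (by rw [Fin.val_mk]; omega), dif_pos (by rw [Fin.val_mk]; omega)]
      congr 1
    refine ⟨z, hzlast, ?_⟩
    rw [hdef]
    simp only []
    rw [htail, clampCube_coe, hz0, clampR_eq_self (Nat.le_ceil |s|)]
  refine measure_mono_null hsub ?_
  refine measure_iUnion_null fun i => measure_iUnion_null fun j => measure_iUnion_null fun N => ?_
  have hvec : LipschitzWith (KG * 1 * 1) (fun z : Fin m → ℝ => G (clampCube (tailmap hkm z))) :=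
    (hKG.comp clampCube_lipschitz).comp (tailmap_lipschitz hkm)
  have hvecij : LipschitzWith (1 * (KG * 1 * 1) + 1 * (KG * 1 * 1))
      (fun z : Fin m → ℝ => G (clampCube (tailmap hkm z)) i - G (clampCube (tailmap hkm z)) j) :=
    ((LipschitzWith.eval i).comp hvec).sub ((LipschitzWith.eval j).comp hvec)
  have : Nonempty (I^(Fin k)) := ⟨fun _ => 0⟩
  obtain ⟨C, hC⟩ := bound_of_continuous (fun y : I^(Fin k) => ‖G y i - G y j‖)
    (((continuous_apply i).comp hKG.continuous).sub ((continuous_apply j).comp hKG.continuous)).norm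
  obtain ⟨K, hK⟩ := exists_lipschitz_smul (Mc := (N:ℝ)) (Mv := C)
    ((clampR_lipschitz N).comp (LipschitzWith.eval (⟨0, by omega⟩ : Fin m)))
    hvecij (fun a => clampR_abs_le N _) (fun a => hC _)
  exact volume_image_null (by omega) K hK.lipschitzOnWith hSnull

lemma exists_good_v {n m : ℕ} {k k' : ℕ} (hk : k + 2 ≤ m) (hk' : k' + 2 ≤ m)
    (G : (I^(Fin k)) → Fin n → Fin m → ℝ) (G' : (I^(Fin k')) → Fin n → Fin m → ℝ)
    (hG : ∃ K, LipschitzWith K G) (hG' : ∃ K, LipschitzWith K G') :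
    ∃ v : Fin m → ℝ, v ≠ 0 ∧ (∀ (s : ℝ) (y : I^(Fin k)) (i j : Fin n), v ≠ s • (G y i - G y j)) ∧
      (∀ (s : ℝ) (y : I^(Fin k')) (i j : Fin n), v ≠ s • (G' y i - G' y j)) := by
  have hm : 2 ≤ m := by omega
  set bad : Set (Fin m → ℝ) := coneSet G ∪ coneSet G' ∪ {z | z ⟨0, by omega⟩ = 0} with hbad
  have hnull : volume bad = 0 := by
    refine measure_union_null (measure_union_null (cone_null hk G hG) (cone_null hk' G' hG')) ?_
    exact hyperplane_null _
  have hne : bad ≠ Set.univ := by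
    intro h
    have h2 : (0:ℝ≥0∞) < volume (Metric.ball (0 : Fin m → ℝ) 1) :=
      Metric.measure_ball_pos _ _ one_pos
    rw [← hnull, h] at h2
    exact absurd (measure_mono (Set.subset_univ _)) (not_le.2 h2)
  obtain ⟨v, hv⟩ : ∃ v, v ∉ bad := by
    by_contra hc
    push_neg at hc
    exact hne (Set.eq_univ_of_forall hc)
  rw [hbad] at hv
  simp only [Set.mem_union, Set.mem_setOf_eq, not_or] at hv
  obtain ⟨⟨hv1, hv2⟩, hv3⟩ := hv
  refine ⟨v, ?_, ?_, ?_⟩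
  · intro h; exact hv3 (by rw [h]; rfl)
  · intro s y i j hvc; exact hv1 ⟨s, y, i, j, hvc⟩
  · intro s y i j hvc; exact hv2 ⟨s, y, i, j, hvc⟩

/-- radial coordinate on the cube -/
def rho {k : ℕ} (y : I^(Fin k)) : ℝ := ‖(fun i => 2*(y i : ℝ) - 1 : Fin k → ℝ)‖

lemma rho_nonneg {k : ℕ} (y : I^(Fin k)) : 0 ≤ rho y := norm_nonneg _

lemma rho_le_one {k : ℕ} (y : I^(Fin k)) : rho y ≤ 1 := by
  refine (pi_norm_le_iff_of_nonneg zero_le_one).2 fun i => ?_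
  rw [Real.norm_eq_abs, abs_le]
  constructor <;> [linarith [(y i).2.1]; linarith [(y i).2.2]]

lemma rho_continuous {k : ℕ} : Continuous (rho (k := k)) := by
  unfold rho
  exact (continuous_pi fun i =>
    ((continuous_const.mul ((continuous_apply i).subtype_val)).sub continuous_const)).norm

lemma abs_le_rho {k : ℕ} (y : I^(Fin k)) (i : Fin k) : |2*(y i : ℝ) - 1| ≤ rho y := by
  have := norm_le_pi_norm (fun j => 2*(y j : ℝ) - 1 : Fin k → ℝ) i
  rw [Real.norm_eq_abs] at this; exact this

lemma rho_boundary {k : ℕ} {y : I^(Fin k)} (hy : y ∈ Cube.boundary (Fin k)) : rho y = 1 := by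
  obtain ⟨i, hi⟩ := hy
  refine le_antisymm (rho_le_one y) ?_
  have h1 : |2*(y i : ℝ) - 1| = 1 := by
    rcases hi with h | h <;> rw [h] <;> norm_num
  calc (1:ℝ) = |2*(y i : ℝ) - 1| := h1.symm
    _ ≤ rho y := abs_le_rho y i

/-- rescaled point in the cube -/
def zpt {k : ℕ} (y : I^(Fin k)) (r : ℝ) : I^(Fin k) :=
  clampCube (fun i => 1/2 + ((y i : ℝ) - 1/2)/r)

lemma zpt_one {k : ℕ} (y : I^(Fin k)) : zpt y 1 = y := by
  funext i
  have h : (1:ℝ)/2 + ((y i : ℝ) - 1/2)/1 = (y i : ℝ) := by ring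
  show Set.projIcc 0 1 zero_le_one (1/2 + ((y i : ℝ) - 1/2)/1) = y i
  rw [h]
  simp

lemma zpt_coe {k : ℕ} (y : I^(Fin k)) {r : ℝ} (h0 : 0 < r) (hle : rho y ≤ r) (i : Fin k) :
    (zpt y r i : ℝ) = 1/2 + ((y i : ℝ) - 1/2)/r := by
  have habs : |(y i : ℝ) - 1/2| ≤ r/2 := by
    have := abs_le_rho y i
    have h2 : |2*(y i:ℝ) - 1| = 2 * |(y i : ℝ) - 1/2| := by
      have he : 2*(y i:ℝ) - 1 = 2*((y i : ℝ) - 1/2) := by ring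
      rw [he, abs_mul, abs_two]
    rw [h2] at this; linarith
  have hmem : 1/2 + ((y i : ℝ) - 1/2)/r ∈ Set.Icc (0:ℝ) 1 := by
    have hd : |((y i : ℝ) - 1/2)/r| ≤ 1/2 := by
      rw [abs_div, abs_of_pos h0, div_le_iff₀ h0]
      linarith
    rw [abs_le] at hd
    constructor <;> [linarith [hd.1]; linarith [hd.2]]
  show (Set.projIcc 0 1 zero_le_one (1/2 + ((y i : ℝ) - 1/2)/r) : ℝ) = _
  rw [Set.projIcc_of_mem _ hmem]

lemma rho_zpt {k : ℕ} (y : I^(Fin k)) {r : ℝ} (h0 : 0 < r) (hle : rho y ≤ r) :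
    rho (zpt y r) = rho y / r := by
  have hv : (fun i => 2*((zpt y r i : ℝ)) - 1) = r⁻¹ • (fun i => 2*(y i : ℝ) - 1 : Fin k → ℝ) := by
    funext i
    rw [zpt_coe y h0 hle i]
    simp only [Pi.smul_apply, smul_eq_mul]
    field_simp
    ring
  unfold rho
  rw [hv, norm_smul, Real.norm_eq_abs, abs_inv, abs_of_pos h0, div_eq_inv_mul]

/-- clamp to [0,1] -/
def clamp01 (r : ℝ) : ℝ := max 0 (min 1 r)

lemma clamp01_lipschitz : LipschitzWith 1 clamp01 := by
  refine LipschitzWith.of_dist_le_mul fun a b => ?_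
  rw [Real.dist_eq, Real.dist_eq, NNReal.coe_one, one_mul]
  unfold clamp01
  calc |max 0 (min 1 a) - max 0 (min 1 b)|
      = |max (min 1 a) 0 - max (min 1 b) 0| := by rw [max_comm, max_comm (0:ℝ)]
    _ ≤ |min 1 a - min 1 b| := abs_max_sub_max_le_abs _ _ _
    _ ≤ max |(1:ℝ) - 1| |a - b| := abs_min_sub_min_le_max _ _ _ _
    _ ≤ |a - b| := by simp

lemma clamp01_mem (r : ℝ) : clamp01 r ∈ Set.Icc (0:ℝ) 1 :=
  ⟨le_max_left _ _, max_le (by norm_num) (min_le_left _ _)⟩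

lemma clamp01_of_nonpos {r : ℝ} (h : r ≤ 0) : clamp01 r = 0 := by
  unfold clamp01
  rw [max_eq_left]
  exact (min_le_right _ _).trans h

lemma clamp01_one {r : ℝ} (h : 1 ≤ r) : clamp01 r = 1 := by
  unfold clamp01
  rw [min_eq_left h, max_eq_right zero_le_one]

lemma isOpen_inj {n m : ℕ} : IsOpen {z : Fin n → Fin m → ℝ | Function.Injective z} := by
  have hset : {z : Fin n → Fin m → ℝ | Function.Injective z}
      = ⋂ (i : Fin n) (j : Fin n), {z | i ≠ j → z i ≠ z j} := by
    ext z
    simp only [Set.mem_setOf_eq, Set.mem_iInter]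
    constructor
    · intro h i j hij hz; exact hij (h hz)
    · intro h i j hz; by_contra hij; exact h i j hij hz
  rw [hset]
  refine isOpen_iInter_of_finite fun i => isOpen_iInter_of_finite fun j => ?_
  by_cases hij : i = j
  · simp [hij]
  · have : {z : Fin n → Fin m → ℝ | i ≠ j → z i ≠ z j} = {z | z i ≠ z j} := by
      ext z; simp [hij]
    rw [this]
    exact (isClosed_eq (continuous_apply i) (continuous_apply j)).isOpen_compl

/-- the subalgebra of Lipschitz functions on the cube -/
def lipAlg (k : ℕ) : Subalgebra ℝ C(I^(Fin k), ℝ) where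
  carrier := {φ | ∃ K, LipschitzWith K ⇑φ}
  add_mem' := by
    rintro φ ψ ⟨K1, h1⟩ ⟨K2, h2⟩
    exact ⟨K1 + K2, h1.add h2⟩
  mul_mem' := by
    rintro φ ψ ⟨K1, h1⟩ ⟨K2, h2⟩
    obtain ⟨K, hK⟩ := exists_lipschitz_smul (Mc := ‖φ‖) (Mv := ‖ψ‖) h1 h2
      (fun a => by simpa [Real.norm_eq_abs] using φ.norm_coe_le_norm a)
      (fun a => ψ.norm_coe_le_norm a)
    exact ⟨K, hK⟩
  algebraMap_mem' := fun r => ⟨0, by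
    have : ⇑(algebraMap ℝ C(I^(Fin k), ℝ) r) = fun _ => r := by
      funext y; simp [Algebra.algebraMap_eq_smul_one]
    rw [this]
    exact LipschitzWith.const r⟩

lemma lipAlg_separates (k : ℕ) : (lipAlg k).SeparatesPoints := by
  intro y z hyz
  obtain ⟨i, hi⟩ := Function.ne_iff.1 hyz
  refine ⟨fun w => (w i : ℝ), ⟨⟨fun w => (w i : ℝ), (continuous_apply i).subtype_val⟩, ⟨1, ?_⟩, rfl⟩, ?_⟩
  · refine LipschitzWith.of_dist_le_mul fun a b => ?_
    rw [NNReal.coe_one, one_mul]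
    calc dist ((a i : ℝ)) ((b i : ℝ)) = dist (a i) (b i) := (Subtype.dist_eq _ _).symm
      _ ≤ dist a b := dist_le_pi_dist a b i
  · exact fun h => hi (Subtype.coe_injective h)

lemma exists_lipschitz_approx {n m k : ℕ} (F : C(I^(Fin k), Fin n → Fin m → ℝ)) {ε : ℝ}
    (hε : 0 < ε) :
    ∃ g : (I^(Fin k)) → Fin n → Fin m → ℝ,
      (∃ K, LipschitzWith K g) ∧ ∀ y, dist (g y) (F y) ≤ ε := by
  set Fc : Fin n × Fin m → C(I^(Fin k), ℝ) := fun p =>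
    ⟨fun y => F y p.1 p.2, ((continuous_apply p.2).comp ((continuous_apply p.1).comp F.continuous))⟩
    with hFc
  have comp : ∀ p : Fin n × Fin m, ∃ gA : lipAlg k, ‖(gA : C(I^(Fin k), ℝ)) - Fc p‖ < ε :=
    fun p => ContinuousMap.exists_mem_subalgebra_near_continuousMap_of_separatesPoints
      (lipAlg k) (lipAlg_separates k) (Fc p) ε hε
  choose gA hgA using comp
  have hmem : ∀ p : Fin n × Fin m, ∃ K, LipschitzWith K ⇑(gA p : C(I^(Fin k), ℝ)) :=
    fun p => (gA p).2
  choose Kc hKc using hmem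
  refine ⟨fun y i j => (gA (i, j) : C(I^(Fin k), ℝ)) y, ⟨Finset.univ.sup Kc, ?_⟩, ?_⟩
  · refine LipschitzWith.of_dist_le_mul fun a b => ?_
    refine (dist_pi_le_iff (by positivity)).2 fun i => (dist_pi_le_iff (by positivity)).2 fun j => ?_
    calc dist ((gA (i, j) : C(I^(Fin k), ℝ)) a) ((gA (i, j) : C(I^(Fin k), ℝ)) b)
        ≤ (Kc (i, j) : ℝ) * dist a b := (hKc (i, j)).dist_le_mul a b
      _ ≤ (Finset.univ.sup Kc : ℝ≥0) * dist a b := by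
          gcongr
          exact_mod_cast NNReal.coe_le_coe.2 (Finset.le_sup (Finset.mem_univ (i, j)))
  · intro y
    refine (dist_pi_le_iff hε.le).2 fun i => (dist_pi_le_iff hε.le).2 fun j => ?_
    have h1 : dist ((gA (i, j) : C(I^(Fin k), ℝ)) y) (F y i j)
        = ‖((gA (i, j) : C(I^(Fin k), ℝ)) - Fc (i, j)) y‖ := by
      rw [ContinuousMap.sub_apply, dist_eq_norm]
      rfl
    rw [h1]
    exact (ContinuousMap.norm_coe_le_norm _ y).trans (hgA (i, j)).le

lemma inj_step {n m k : ℕ} {v : Fin m → ℝ} {G : (I^(Fin k)) → Fin n → Fin m → ℝ}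
    (hGinj : ∀ z, Function.Injective (G z))
    (hv : ∀ (s : ℝ) (y : I^(Fin k)) (i j : Fin n), v ≠ s • (G y i - G y j))
    {s : ℝ} (h0 : 0 ≤ s) (z : I^(Fin k)) :
    Function.Injective (fun i : Fin n => (1 - s) • G z i + (s * ((i : ℕ) + 1)) • v) := by
  intro i j hij
  by_contra hne
  simp only [] at hij
  have key : (1 - s) • (G z i - G z j) = (s * (((j : ℕ) : ℝ) - ((i : ℕ) : ℝ))) • v := by
    funext a
    have h := congrFun hij a
    simp only [Pi.add_apply, Pi.smul_apply, Pi.sub_apply, smul_eq_mul] at h ⊢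
    linear_combination h
  rcases eq_or_lt_of_le h0 with hs0 | hs
  · rw [← hs0] at key
    simp only [sub_zero, one_smul, zero_mul, zero_smul] at key
    exact hne (hGinj z (by rwa [sub_eq_zero] at key))
  · have hvij : (((j : ℕ) : ℝ) - ((i : ℕ) : ℝ)) ≠ 0 :=
      sub_ne_zero.2 fun h => hne (Fin.ext (Nat.cast_injective h)).symm
    have ha : s * (((j : ℕ) : ℝ) - ((i : ℕ) : ℝ)) ≠ 0 := mul_ne_zero (ne_of_gt hs) hvij
    have : v = ((s * (((j : ℕ) : ℝ) - ((i : ℕ) : ℝ)))⁻¹ * (1 - s)) • (G z i - G z j) := by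
      rw [mul_smul, key, inv_smul_smul₀ ha]
    exact hv _ z i j this

lemma rho_lipschitz {k : ℕ} : LipschitzWith 2 (rho (k := k)) := by
  refine LipschitzWith.of_dist_le_mul fun a b => ?_
  rw [Real.dist_eq]
  have h1 : |rho a - rho b| ≤ ‖(fun i => 2*(a i:ℝ) - 1 : Fin k → ℝ) - (fun i => 2*(b i:ℝ) - 1)‖ :=
    abs_norm_sub_norm_le _ _
  refine h1.trans ?_
  have h2 : (0:ℝ) ≤ 2 * dist a b := by positivity
  refine (pi_norm_le_iff_of_nonneg h2).2 fun i => ?_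
  have : ((fun i => 2*(a i:ℝ) - 1 : Fin k → ℝ) - fun i => 2*(b i:ℝ) - 1) i
      = 2 * ((a i : ℝ) - (b i : ℝ)) := by
    simp only [Pi.sub_apply]; ring
  rw [this, Real.norm_eq_abs, abs_mul, abs_two]
  have : |(a i : ℝ) - (b i : ℝ)| = dist (a i) (b i) := by
    rw [Subtype.dist_eq, Real.dist_eq]
  rw [this]
  have := dist_le_pi_dist a b i
  norm_num
  linarith

lemma genloop_homotopic_const {n m k : ℕ} (hkm : k + 2 ≤ m) (hk : 1 ≤ k)
    (x : Conf n m) (f : GenLoop (Fin k) (Conf n m) x) :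
    GenLoop.Homotopic f GenLoop.const := by
  classical
  have hne : Nonempty (I^(Fin k)) := ⟨fun _ => 0⟩
  have hI0 : ((0:I):ℝ) = 0 := rfl
  have hI1 : ((1:I):ℝ) = 1 := rfl
  set Fv : (I^(Fin k)) → (Fin n → Fin m → ℝ) := fun y => (f y).1 with hFv
  have hFc : Continuous Fv := continuous_subtype_val.comp f.1.continuous
  have hFb : ∀ y ∈ Cube.boundary (Fin k), Fv y = x.1 := fun y hy =>
    congrArg Subtype.val (f.2 y hy)
  obtain ⟨δT, hδT, hthick⟩ := (isCompact_range hFc).exists_thickening_subset_open isOpen_inj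
    (by rintro z ⟨y, rfl⟩; exact (f y).2)
  set ε := δT / 8 with hεdef
  have hεpos : 0 < ε := by positivity
  have hclose : ∀ (y : I^(Fin k)) (z : Fin n → Fin m → ℝ), dist z (Fv y) ≤ 3 * ε →
      Function.Injective z := by
    intro y z hz
    refine hthick (Metric.mem_thickening_iff.2 ⟨Fv y, Set.mem_range_self y, ?_⟩)
    rw [hεdef] at hz; linarith
  obtain ⟨δ₁, hδ₁pos, hδ₁⟩ := Metric.uniformContinuous_iff.1
    (CompactSpace.uniformContinuous_of_continuous hFc) ε hεpos
  set δ := min δ₁ 1 with hδdef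
  have hδpos : 0 < δ := lt_min hδ₁pos one_pos
  have hδ1 : δ ≤ 1 := min_le_right _ _
  -- near-boundary estimate
  have hnear : ∀ y : I^(Fin k), 1 - δ < rho y → dist (Fv y) x.1 ≤ ε := by
    intro y hy
    have hex : ∃ i, 1 - δ < |2 * (y i : ℝ) - 1| := by
      by_contra hcon
      push_neg at hcon
      have : rho y ≤ 1 - δ := (pi_norm_le_iff_of_nonneg (by linarith)).2 fun i => by
        rw [Real.norm_eq_abs]; exact hcon i
      linarith
    obtain ⟨i, hi⟩ := hex
    have key : ∀ b : I^(Fin k), b ∈ Cube.boundary (Fin k) → dist y b < δ₁ → dist (Fv y) x.1 ≤ ε := by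
      intro b hbb hdb
      have h2 := hδ₁ hdb
      rw [hFb b hbb] at h2
      exact h2.le
    by_cases hhalf : (y i : ℝ) ≤ 1/2
    · refine key (Function.update y i 0) ⟨i, Or.inl (by rw [Function.update_self])⟩ ?_
      have hyi : (y i : ℝ) < δ/2 := by
        have habs : |2*(y i:ℝ) - 1| = 1 - 2*(y i:ℝ) := by
          rw [abs_of_nonpos (by linarith)]; ring
        rw [habs] at hi; linarith
      have hb2 : dist y (Function.update y i 0) ≤ δ/2 := by
        refine (dist_pi_le_iff (by positivity)).2 fun j => ?_
        by_cases hji : j = i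
        · subst hji
          rw [Function.update_self, Subtype.dist_eq, Real.dist_eq]
          show |(y j : ℝ) - ((0:I):ℝ)| ≤ δ/2
          rw [hI0, sub_zero, abs_of_nonneg (y j).2.1]
          exact hyi.le
        · rw [Function.update_of_ne hji]
          simp only [dist_self]
          positivity
      calc dist y (Function.update y i 0) ≤ δ/2 := hb2
        _ < δ := by linarith
        _ ≤ δ₁ := min_le_left _ _
    · refine key (Function.update y i 1) ⟨i, Or.inr (by rw [Function.update_self])⟩ ?_
      push_neg at hhalf
      have hyi : 1 - δ/2 < (y i : ℝ) := by
        have habs : |2*(y i:ℝ) - 1| = 2*(y i:ℝ) - 1 := abs_of_nonneg (by linarith)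
        rw [habs] at hi; linarith
      have hb2 : dist y (Function.update y i 1) ≤ δ/2 := by
        refine (dist_pi_le_iff (by positivity)).2 fun j => ?_
        by_cases hji : j = i
        · subst hji
          rw [Function.update_self, Subtype.dist_eq, Real.dist_eq]
          show |(y j : ℝ) - ((1:I):ℝ)| ≤ δ/2
          rw [hI1, abs_of_nonpos (by linarith [(y j).2.2])]
          linarith
        · rw [Function.update_of_ne hji]
          simp only [dist_self]
          positivity
      calc dist y (Function.update y i 1) ≤ δ/2 := hb2
        _ < δ := by linarith
        _ ≤ δ₁ := min_le_left _ _
  -- Lipschitz approximation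
  obtain ⟨g, hgLip, hgF0⟩ := exists_lipschitz_approx (n := n) (m := m) ⟨Fv, hFc⟩ hεpos
  obtain ⟨Kg, hKg⟩ := hgLip
  have hgF : ∀ y, dist (g y) (Fv y) ≤ ε := hgF0
  -- the correction factor
  set β : (I^(Fin k)) → ℝ := fun y => clamp01 ((rho y - (1 - δ)) / δ) with hβdef
  have hβ01 : ∀ y, β y ∈ Set.Icc (0:ℝ) 1 := fun y => clamp01_mem _
  have hβ1 : ∀ y, rho y = 1 → β y = 1 := by
    intro y hy
    rw [hβdef]
    simp only [hy]
    exact clamp01_one (by rw [show (1 - (1 - δ))/δ = 1 by field_simp; ring])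
  have hβ0 : ∀ y, rho y ≤ 1 - δ → β y = 0 := fun y hy =>
    clamp01_of_nonpos (div_nonpos_of_nonpos_of_nonneg (by linarith) hδpos.le)
  have haff : LipschitzWith (δ⁻¹).toNNReal (fun t : ℝ => (t - (1 - δ)) / δ) := by
    refine LipschitzWith.of_dist_le_mul fun a b => ?_
    rw [Real.dist_eq, Real.dist_eq, Real.coe_toNNReal _ (by positivity)]
    have heq : (a - (1 - δ))/δ - (b - (1 - δ))/δ = (a - b)/δ := by ring
    rw [heq, abs_div, abs_of_pos hδpos, div_eq_inv_mul]
  have hβLip : LipschitzWith (1 * ((δ⁻¹).toNNReal * 2)) β :=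
    clamp01_lipschitz.comp (haff.comp rho_lipschitz)
  -- the corrected approximation
  set gm : (I^(Fin k)) → (Fin n → Fin m → ℝ) := fun y => g y + β y • (x.1 - g y) with hgmdef
  have hgmLip : ∃ K, LipschitzWith K gm := by
    obtain ⟨C, hC⟩ := bound_of_continuous (fun y : I^(Fin k) => ‖x.1 - g y‖)
      ((continuous_const.sub hKg.continuous).norm)
    obtain ⟨K2, hK2⟩ := exists_lipschitz_smul (Mc := (1:ℝ)) (Mv := C) hβLip
      ((LipschitzWith.const x.1).sub hKg)
      (fun a => abs_le.2 ⟨by linarith [(hβ01 a).1], (hβ01 a).2⟩)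
      (fun a => hC a)
    exact ⟨Kg + K2, hKg.add hK2⟩
  obtain ⟨Kgm, hKgm⟩ := hgmLip
  have hgmc : Continuous gm := hKgm.continuous
  have hgm_err : ∀ y, dist (gm y) (Fv y) ≤ 3 * ε := by
    intro y
    by_cases h0 : β y = 0
    · have : gm y = g y := by rw [hgmdef]; simp only [h0, zero_smul, add_zero]
      rw [this]
      linarith [hgF y]
    · have hρ : 1 - δ < rho y := by
        by_contra hcon
        push_neg at hcon
        exact h0 (hβ0 y hcon)
      have h1 : dist x.1 (Fv y) ≤ ε := by rw [dist_comm]; exact hnear y hρ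
      have h2 : ‖x.1 - g y‖ ≤ 2 * ε := by
        calc ‖x.1 - g y‖ = dist x.1 (g y) := (dist_eq_norm _ _).symm
          _ ≤ dist x.1 (Fv y) + dist (Fv y) (g y) := dist_triangle _ _ _
          _ ≤ ε + ε := add_le_add h1 (by rw [dist_comm]; exact hgF y)
          _ = 2*ε := by ring
      have h3 : dist (gm y) (g y) ≤ 2 * ε := by
        rw [hgmdef]
        simp only []
        rw [dist_eq_norm, add_sub_cancel_left, norm_smul, Real.norm_eq_abs,
          abs_of_nonneg (hβ01 y).1]
        calc β y * ‖x.1 - g y‖ ≤ 1 * (2*ε) :=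
          mul_le_mul (hβ01 y).2 h2 (norm_nonneg _) zero_le_one
          _ = 2 * ε := by ring
      calc dist (gm y) (Fv y) ≤ dist (gm y) (g y) + dist (g y) (Fv y) := dist_triangle _ _ _
        _ ≤ 2*ε + ε := add_le_add h3 (hgF y)
        _ = 3 * ε := by ring
  have hgmInj : ∀ y, Function.Injective (gm y) := fun y => hclose y _ (hgm_err y)
  have hgm1 : ∀ y, rho y = 1 → gm y = x.1 := by
    intro y hy
    rw [hgmdef]
    simp only [hβ1 y hy, one_smul]
    abel
  have hgmb : ∀ y ∈ Cube.boundary (Fin k), gm y = x.1 := fun y hy => hgm1 y (rho_boundary hy)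
  -- choose the escape direction
  obtain ⟨v, hv0, hv, -⟩ := exists_good_v hkm hkm gm gm ⟨Kgm, hKgm⟩ ⟨Kgm, hKgm⟩
  have hvx : ∀ (s : ℝ) (y : I^(Fin k)) (i j : Fin n), v ≠ s • (x.1 i - x.1 j) := by
    intro s y i j
    have hb0 : (fun _ => 0 : I^(Fin k)) ∈ Cube.boundary (Fin k) := ⟨⟨0, by omega⟩, Or.inl rfl⟩
    have h5 := hv s (fun _ => 0) i j
    rwa [hgmb _ hb0] at h5
  -- the first intermediate genloop
  set G1 : GenLoop (Fin k) (Conf n m) x :=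
    ⟨⟨fun y => ⟨gm y, hgmInj y⟩, (hgmc.subtype_mk _)⟩,
      fun y hy => Subtype.ext (hgmb y hy)⟩ with hG1def
  -- step 1 : straight-line from f to G1
  have step1 : GenLoop.Homotopic f G1 := by
    refine ⟨⟨⟨⟨fun p => ⟨Fv p.2 + (p.1 : ℝ) • (gm p.2 - Fv p.2), ?_⟩, ?_⟩, ?_, ?_⟩, ?_⟩⟩
    · refine hclose p.2 _ ?_
      rw [dist_eq_norm, add_sub_cancel_left, norm_smul, Real.norm_eq_abs,
        abs_of_nonneg p.1.2.1]
      calc (p.1:ℝ) * ‖gm p.2 - Fv p.2‖ ≤ 1 * (3*ε) := by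
            refine mul_le_mul p.1.2.2 ?_ (norm_nonneg _) zero_le_one
            rw [← dist_eq_norm]
            exact hgm_err p.2
        _ = 3*ε := by ring
    · exact (hFc.comp continuous_snd |>.add
        ((continuous_subtype_val.comp continuous_fst).smul
          ((hgmc.comp continuous_snd).sub (hFc.comp continuous_snd)))).subtype_mk _
    · intro y
      refine Subtype.ext ?_
      show Fv y + ((0:I) : ℝ) • (gm y - Fv y) = Fv y
      rw [hI0, zero_smul, add_zero]
    · intro y
      refine Subtype.ext ?_
      show Fv y + ((1:I) : ℝ) • (gm y - Fv y) = gm y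
      rw [hI1, one_smul]
      abel
    · intro t y hy
      refine Subtype.ext ?_
      show Fv y + (t : ℝ) • (gm y - Fv y) = (f.1 y).1
      rw [hFb y hy, hgmb y hy]
      show x.1 + (t : ℝ) • (x.1 - x.1) = (f.1 y).1
      rw [sub_self, smul_zero, add_zero, f.2 y hy]
  -- data for step 2
  set S2 : I × (I^(Fin k)) → ℝ := fun p => min (p.1 : ℝ) (1 - rho p.2) with hS2def
  set R2 : I × (I^(Fin k)) → ℝ := fun p => max (1 - (p.1 : ℝ)) (rho p.2) with hR2def
  set H2v : I × (I^(Fin k)) → (Fin n → Fin m → ℝ) := fun p =>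
    fun i => (1 - S2 p) • gm (zpt p.2 (R2 p)) i + ((S2 p) * (((i:ℕ):ℝ) + 1)) • v with hH2vdef
  have hS2c : Continuous S2 :=
    (continuous_subtype_val.comp continuous_fst).min
      (continuous_const.sub (rho_continuous.comp continuous_snd))
  have hR2c : Continuous R2 :=
    (continuous_const.sub (continuous_subtype_val.comp continuous_fst)).max
      (rho_continuous.comp continuous_snd)
  have hS2mem : ∀ p, 0 ≤ S2 p ∧ S2 p ≤ 1 := fun p =>
    ⟨le_min p.1.2.1 (by linarith [rho_le_one p.2]), (min_le_left _ _).trans p.1.2.2⟩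
  have hR2nonneg : ∀ p, 0 ≤ R2 p := fun p =>
    le_trans (by linarith [p.1.2.2] : (0:ℝ) ≤ 1 - (p.1:ℝ)) (le_max_left _ _)
  have hinj2 : ∀ p, Function.Injective (H2v p) := fun p =>
    inj_step hgmInj hv (hS2mem p).1 (zpt p.2 (R2 p))
  set wv : Fin n → Fin m → ℝ := fun i => (((i:ℕ):ℝ) + 1) • v with hwvdef
  have hH2c : Continuous H2v := by
    rw [continuous_iff_continuousAt]
    intro p
    by_cases hr : R2 p = 0
    · -- degenerate point : value is wv, use squeeze
      have ht1 : (p.1 : ℝ) = 1 := by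
        have h1 : 1 - (p.1:ℝ) ≤ 0 := hr ▸ le_max_left _ _
        have := p.1.2.2
        linarith
      have hρ0 : rho p.2 = 0 := le_antisymm (hr ▸ le_max_right _ _) (rho_nonneg _)
      have hS2p : S2 p = 1 := by
        rw [hS2def]
        simp only [ht1, hρ0]
        norm_num
      have hval : H2v p = wv := by
        funext i
        rw [hH2vdef]
        simp only [hS2p, sub_self, zero_smul, one_mul, zero_add]
        rfl
      obtain ⟨C, hC⟩ := bound_of_continuous (fun z : I^(Fin k) => ‖gm z - wv‖)
        ((hgmc.sub continuous_const).norm)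
      have hC0 : 0 ≤ C := le_trans (norm_nonneg _) (hC (fun _ => 0))
      rw [ContinuousAt, hval, tendsto_iff_dist_tendsto_zero]
      have hbound : ∀ q, dist (H2v q) wv ≤ (1 - S2 q) * C := by
        intro q
        have h1 : 0 ≤ 1 - S2 q := by linarith [(hS2mem q).2]
        refine (dist_pi_le_iff (by positivity)).2 fun i => ?_
        rw [dist_eq_norm]
        have heq : H2v q i - wv i = (1 - S2 q) • (gm (zpt q.2 (R2 q)) i - wv i) := by
          rw [hH2vdef]
          simp only [hwvdef]
          funext b
          simp only [Pi.add_apply, Pi.smul_apply, Pi.sub_apply, smul_eq_mul]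
          ring
        rw [heq, norm_smul, Real.norm_eq_abs, abs_of_nonneg h1]
        have h3 : ‖gm (zpt q.2 (R2 q)) i - wv i‖ ≤ C := by
          have h4 := norm_le_pi_norm (gm (zpt q.2 (R2 q)) - wv) i
          rw [Pi.sub_apply] at h4
          exact h4.trans (hC _)
        exact mul_le_mul_of_nonneg_left h3 h1
      refine squeeze_zero (fun q => dist_nonneg) hbound ?_
      have h6 : Filter.Tendsto (fun q => (1 - S2 q) * C) (nhds p) (nhds ((1 - S2 p) * C)) :=
        ((continuous_const.sub hS2c).mul continuous_const).tendsto p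
      rwa [hS2p, sub_self, zero_mul] at h6
    · -- regular point
      have hrpos : 0 < R2 p := lt_of_le_of_ne (hR2nonneg p) (Ne.symm hr)
      have hZc : ContinuousAt (fun q : I × (I^(Fin k)) => zpt q.2 (R2 q)) p := by
        have hinner : ContinuousAt
            (fun q : I × (I^(Fin k)) => fun i => 1/2 + ((q.2 i : ℝ) - 1/2)/(R2 q)) p := by
          refine continuousAt_pi.2 fun i => ?_
          refine ContinuousAt.add continuousAt_const ?_
          refine ContinuousAt.div ?_ hR2c.continuousAt (ne_of_gt hrpos)
          exact ContinuousAt.sub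
            ((continuous_subtype_val.comp ((continuous_apply i).comp continuous_snd)).continuousAt)
            continuousAt_const
        exact (clampCube_lipschitz.continuous.continuousAt.comp hinner : _)
      refine continuousAt_pi.2 fun i => ?_
      refine ContinuousAt.add ?_ ?_
      · exact ContinuousAt.smul ((continuous_const.sub hS2c).continuousAt)
          (((continuous_apply i).continuousAt).comp (hgmc.continuousAt.comp hZc))
      · exact ContinuousAt.smul ((hS2c.continuousAt).mul continuousAt_const) continuousAt_const
  -- the second intermediate genloop
  have hG2inj : ∀ y : I^(Fin k), Function.Injective
      (fun i : Fin n => (1 - (1 - rho y)) • x.1 i + ((1 - rho y) * (((i:ℕ):ℝ) + 1)) • v) :=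
    fun y => inj_step (G := fun _ : I^(Fin k) => x.1) (fun _ => x.2)
      (fun s y' i j => hvx s y' i j) (by linarith [rho_le_one y]) y
  set G2 : GenLoop (Fin k) (Conf n m) x :=
    ⟨⟨fun y => ⟨fun i => (1 - (1 - rho y)) • x.1 i + ((1 - rho y) * (((i:ℕ):ℝ) + 1)) • v,
        hG2inj y⟩,
      by
        refine Continuous.subtype_mk ?_ _
        refine continuous_pi fun i => ?_
        exact ((continuous_const.sub (continuous_const.sub rho_continuous)).smul
            continuous_const).add
          (((continuous_const.sub rho_continuous).mul continuous_const).smul continuous_const)⟩,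
      by
        intro y hy
        refine Subtype.ext ?_
        show (fun i => (1 - (1 - rho y)) • x.1 i + ((1 - rho y) * (((i:ℕ):ℝ) + 1)) • v) = x.1
        funext i
        rw [rho_boundary hy]
        simp⟩ with hG2def
  -- step 2
  have step2 : GenLoop.Homotopic G1 G2 := by
    refine ⟨⟨⟨⟨fun p => ⟨H2v p, hinj2 p⟩, hH2c.subtype_mk _⟩, ?_, ?_⟩, ?_⟩⟩
    · intro y
      refine Subtype.ext ?_
      show H2v (0, y) = gm y
      have hS : S2 (0, y) = 0 := by
        rw [hS2def]
        exact min_eq_left (by rw [hI0]; linarith [rho_le_one y])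
      have hR : R2 (0, y) = 1 := by
        rw [hR2def]
        show max (1 - ((0:I):ℝ)) (rho y) = 1
        rw [hI0, sub_zero]
        exact max_eq_left (rho_le_one y)
      funext i
      rw [hH2vdef]
      simp only [hS, hR, zpt_one, sub_zero, one_smul, zero_mul, zero_smul, add_zero]
    · intro y
      refine Subtype.ext ?_
      show H2v (1, y) = _
      have hS : S2 (1, y) = 1 - rho y := by
        rw [hS2def]
        exact min_eq_right (by rw [hI1]; linarith [rho_nonneg y])
      have hR : R2 (1, y) = rho y := by
        rw [hR2def]
        show max (1 - ((1:I):ℝ)) (rho y) = rho y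
        rw [hI1, sub_self]
        exact max_eq_right (rho_nonneg y)
      funext i
      rw [hH2vdef]
      simp only [hS, hR]
      congr 1
      by_cases hρ0 : rho y = 0
      · rw [hρ0]
        norm_num
      · have hρpos : 0 < rho y := lt_of_le_of_ne (rho_nonneg y) (Ne.symm hρ0)
        have : gm (zpt y (rho y)) = x.1 :=
          hgm1 _ (by rw [rho_zpt y hρpos (le_refl _), div_self hρ0])
        rw [this]
    · intro t y hy
      refine Subtype.ext ?_
      show H2v (t, y) = gm y
      have hρ1 : rho y = 1 := rho_boundary hy
      have hS : S2 (t, y) = 0 := by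
        rw [hS2def]
        show min ((t:I):ℝ) (1 - rho y) = 0
        rw [hρ1, sub_self]
        exact min_eq_right t.2.1
      have hR : R2 (t, y) = 1 := by
        rw [hR2def]
        show max (1 - (t:ℝ)) (rho y) = 1
        rw [hρ1]
        exact max_eq_right (by linarith [t.2.1])
      funext i
      rw [hH2vdef]
      simp only [hS, hR, zpt_one, sub_zero, one_smul, zero_mul, zero_smul, add_zero]
  -- step 3
  have step3 : GenLoop.Homotopic G2 GenLoop.const := by
    refine ⟨⟨⟨⟨fun p =>
      ⟨fun i => (1 - (1 - (p.1:ℝ)) * (1 - rho p.2)) • x.1 i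
        + (((1 - (p.1:ℝ)) * (1 - rho p.2)) * (((i:ℕ):ℝ) + 1)) • v, ?_⟩, ?_⟩, ?_, ?_⟩, ?_⟩⟩
    · exact inj_step (G := fun _ : I^(Fin k) => x.1) (fun _ => x.2)
        (fun s y' i j => hvx s y' i j)
        (mul_nonneg (by linarith [p.1.2.2]) (by linarith [rho_le_one p.2])) p.2
    · refine Continuous.subtype_mk ?_ _
      refine continuous_pi fun i => ?_
      have hTc : Continuous (fun p : I × (I^(Fin k)) =>
          (1 - (p.1:ℝ)) * (1 - rho p.2)) :=
        (continuous_const.sub (continuous_subtype_val.comp continuous_fst)).mul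
          (continuous_const.sub (rho_continuous.comp continuous_snd))
      exact ((continuous_const.sub hTc).smul continuous_const).add
        ((hTc.mul continuous_const).smul continuous_const)
    · intro y
      refine Subtype.ext ?_
      funext i
      show (1 - (1 - ((0:I):ℝ)) * (1 - rho y)) • x.1 i
          + (((1 - ((0:I):ℝ)) * (1 - rho y)) * (((i:ℕ):ℝ) + 1)) • v = _
      rw [hI0]
      norm_num
      simp [hG2def]
    · intro y
      refine Subtype.ext ?_
      funext i
      show (1 - (1 - ((1:I):ℝ)) * (1 - rho y)) • x.1 i
          + (((1 - ((1:I):ℝ)) * (1 - rho y)) * (((i:ℕ):ℝ) + 1)) • v = x.1 i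
      rw [hI1]
      norm_num
    · intro t y hy
      refine Subtype.ext ?_
      funext i
      have hρ1 : rho y = 1 := rho_boundary hy
      show (1 - (1 - (t:ℝ)) * (1 - rho y)) • x.1 i
          + (((1 - (t:ℝ)) * (1 - rho y)) * (((i:ℕ):ℝ) + 1)) • v
        = ((1 - (1 - rho y)) • x.1 i + ((1 - rho y) * (((i:ℕ):ℝ) + 1)) • v : Fin m → ℝ)
      rw [hρ1]
      norm_num
  exact (step1.trans step2).trans step3

lemma joined_aux {n m : ℕ} (hm : 2 ≤ m) (x y : Conf n m) : Joined x y := by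
  obtain ⟨v, hv0, hvx, hvy⟩ := exists_good_v (n := n) (m := m) (k := 0) (k' := 0)
    (by omega) (by omega) (fun _ => x.1) (fun _ => y.1)
    ⟨0, LipschitzWith.const x.1⟩ ⟨0, LipschitzWith.const y.1⟩
  have winj : Function.Injective (fun i : Fin n => ((((i:ℕ):ℝ)) + 1) • v) := by
    intro i j h
    simp only [] at h
    have h2 : ((((i:ℕ):ℝ)) + 1 - ((((j:ℕ):ℝ)) + 1)) • v = 0 := by
      rw [sub_smul, h, sub_self]
    rcases smul_eq_zero.1 h2 with h3 | h3
    · exact Fin.ext (Nat.cast_injective (by linarith [sub_eq_zero.1 h3] : ((i:ℕ):ℝ) = ((j:ℕ):ℝ)))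
    · exact absurd h3 hv0
  set w : Conf n m := ⟨fun i => ((((i:ℕ):ℝ)) + 1) • v, winj⟩ with hw
  have mkpath : ∀ (z : Conf n m),
      (∀ (s : ℝ) (y' : I^(Fin 0)) (i j : Fin n), v ≠ s • (z.1 i - z.1 j)) → Joined z w := by
    intro z hz
    refine ⟨⟨⟨fun t => ⟨fun i => (1 - (t:ℝ)) • z.1 i + ((t:ℝ) * ((((i:ℕ):ℝ)) + 1)) • v,
      inj_step (G := fun _ : I^(Fin 0) => z.1) (fun _ => z.2) hz t.2.1 (fun q => q.elim0)⟩,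
      ?_⟩, ?_, ?_⟩⟩
    · refine Continuous.subtype_mk ?_ _
      refine continuous_pi fun i => ?_
      exact ((continuous_const.sub continuous_subtype_val).smul continuous_const).add
        ((continuous_subtype_val.mul continuous_const).smul continuous_const)
    · refine Subtype.ext ?_
      funext i
      show (1 - ((0:I):ℝ)) • z.1 i + (((0:I):ℝ) * ((((i:ℕ):ℝ)) + 1)) • v = z.1 i
      norm_num
    · refine Subtype.ext ?_
      funext i
      show (1 - ((1:I):ℝ)) • z.1 i + (((1:I):ℝ) * ((((i:ℕ):ℝ)) + 1)) • v
        = ((((i:ℕ):ℝ)) + 1) • v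
      norm_num
  exact (mkpath x hvx).trans (mkpath y hvy).symm

/-- For `n ≥ 1` and `m ≥ 2`, the configuration space `Conf(n,m)` of `n`
distinct labeled points in `ℝ^m` is path-connected, and more generally `(m-2)`-connected:
for every `1 ≤ k ≤ m - 2` and every basepoint its `k`-th homotopy group is trivial. -/
theorem conf_is_highly_connected (n m : ℕ) (hn : 1 ≤ n) (hm : 2 ≤ m) :
    PathConnectedSpace (Conf n m) ∧
    ∀ k : ℕ, 1 ≤ k → k ≤ m - 2 → ∀ x : Conf n m,
      Subsingleton (HomotopyGroup (Fin k) (Conf n m) x) := by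
  constructor
  · refine ⟨⟨⟨fun i _ => ((i:ℕ):ℝ), ?_⟩⟩, fun x y => joined_aux hm x y⟩
    intro i j h
    exact Fin.ext (Nat.cast_injective (congrFun h ⟨0, by omega⟩))
  · intro k hk1 hk2 x
    refine ⟨fun a b => ?_⟩
    refine Quotient.inductionOn₂ a b fun p q => Quotient.sound ?_
    exact (genloop_homotopic_const (by omega) hk1 x p).trans
      (genloop_homotopic_const (by omega) hk1 x q).symm


end FoxNeuwirth
end
end

section
/- In the mod-2 Fox–Neuwirth complex FN_4, the following elements are cocycles: (i) [a,0,0] + [0,a,0] + [0,0,a] for every a > 0; (ii) [a,0,b] + [b,0,a] for all 0 < a < b; (iii) [b,a,b] for all 0 ≤ a ≤ b. That is, δ annihilates each of these elements. -/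
namespace FoxNeuwirth

/-- The ambient space of formal mod-2 combinations of tuples of nonnegative integers.
The mod-2 Fox-Neuwirth complex `FN n` is spanned by the tuples of length `n - 1`. -/
abbrev V : Type := List ℕ →₀ ZMod 2

/-- The set of `(k, N-k)`-shuffles: permutations of `Fin N` that are strictly
increasing on the first `k` positions and on the last `N - k` positions. -/
def shuffles (k N : ℕ) : Finset (Equiv.Perm (Fin N)) :=
  Finset.univ.filter fun σ =>
    (∀ p q : Fin N, p < q → (q : ℕ) < k → σ p < σ q) ∧
    (∀ p q : Fin N, p < q → k ≤ (p : ℕ) → σ p < σ q)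

/-- The `i`-th summand (`i` is 0-indexed) of the mod-2 Fox-Neuwirth differential on a basis
tuple `a`: increment the `i`-th entry of `a` by one; in the resulting tuple locate the maximal
run `A` of consecutive entries strictly greater than `aᵢ` containing position `i`; split `A`
at the entries equal to `aᵢ + 1` into its maximal sub-runs of entries strictly greater than
`aᵢ + 1` (of which `kk` lie weakly to the left of position `i`); sum, over all
`(kk, N - kk)`-shuffles of the `N` sub-runs, the tuple reassembled with single entries
`aᵢ + 1` separating consecutive sub-runs. -/
noncomputable def deltaTerm (a : List ℕ) (i : ℕ) : V :=
  let v := a.getD i 0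
  let lcount := ((a.take i).reverse.takeWhile (fun x => decide (v < x))).length
  let j := i - lcount
  let rcount := ((a.drop (i + 1)).takeWhile (fun x => decide (v < x))).length
  let pre := a.take j
  let suf := a.drop (i + rcount + 1)
  let A := ((a.set i (v + 1)).drop j).take (i - j + rcount + 1)
  let runs := A.splitOnP (fun x => x == v + 1)
  let kk := 1 + ((a.take i).drop j).countP (fun x => x == v + 1)
  ∑ σ ∈ shuffles kk runs.length,
    Finsupp.single
      (pre ++ List.intercalate [v + 1]
        (List.ofFn fun t : Fin runs.length =>
          runs.getD ((σ.symm t : Fin runs.length) : ℕ) []) ++ suf)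
      (1 : ZMod 2)

/-- The differential of the mod-2 Fox-Neuwirth complex, `δ(a) = ∑ᵢ ∑_σ σ·a[i]`. -/
noncomputable def delta : V →ₗ[ZMod 2] V :=
  Finsupp.linearCombination (ZMod 2) fun a : List ℕ =>
    ∑ i ∈ Finset.range a.length, deltaTerm a i

section Helpers

lemma single_self_add' (l : List ℕ) :
    Finsupp.single l (1 : ZMod 2) + Finsupp.single l 1 = 0 := by
  rw [← Finsupp.single_add]
  norm_num
  exact rfl

lemma deltaTerm_eq (a : List ℕ) (i v lcount rcount kk N : ℕ) (pre suf : List ℕ)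
    (runs : List (List ℕ))
    (hv : a.getD i 0 = v)
    (hl : ((a.take i).reverse.takeWhile (fun x => decide (v < x))).length = lcount)
    (hr : ((a.drop (i + 1)).takeWhile (fun x => decide (v < x))).length = rcount)
    (hpre : a.take (i - lcount) = pre)
    (hsuf : a.drop (i + rcount + 1) = suf)
    (hruns : ((((a.set i (v + 1)).drop (i - lcount)).take
        (i - (i - lcount) + rcount + 1)).splitOnP (fun x => x == v + 1)) = runs)
    (hN : runs.length = N)
    (hkk : 1 + ((a.take i).drop (i - lcount)).countP (fun x => x == v + 1) = kk) :
    deltaTerm a i = ∑ σ ∈ shuffles kk N,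
      Finsupp.single (pre ++ List.intercalate [v + 1]
        (List.ofFn fun t : Fin N => runs.getD ((σ.symm t : Fin N) : ℕ) []) ++ suf)
        (1 : ZMod 2) := by
  subst hv hl hr hpre hsuf hruns hN hkk
  rfl

lemma sum_shuffles_12 (f : Equiv.Perm (Fin 2) → V) :
    ∑ σ ∈ shuffles 1 2, f σ = f 1 + f (Equiv.swap 0 1) := by
  rw [show shuffles 1 2 = {1, Equiv.swap 0 1} from by decide,
    Finset.sum_insert (by decide), Finset.sum_singleton]

lemma sum_shuffles_13 (f : Equiv.Perm (Fin 3) → V) :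
    ∑ σ ∈ shuffles 1 3, f σ = f 1 + (f (Equiv.swap 0 1)
      + f (Equiv.swap 0 1 * Equiv.swap 0 2)) := by
  rw [show shuffles 1 3 = {1, Equiv.swap 0 1, Equiv.swap 0 1 * Equiv.swap 0 2} from by decide,
    Finset.sum_insert (by decide), Finset.sum_insert (by decide), Finset.sum_singleton]

lemma sum_shuffles_23 (f : Equiv.Perm (Fin 3) → V) :
    ∑ σ ∈ shuffles 2 3, f σ = f 1 + (f (Equiv.swap 1 2)
      + f (Equiv.swap 0 1 * Equiv.swap 1 2)) := by
  rw [show shuffles 2 3 = {1, Equiv.swap 1 2, Equiv.swap 0 1 * Equiv.swap 1 2} from by decide,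
    Finset.sum_insert (by decide), Finset.sum_insert (by decide), Finset.sum_singleton]

lemma sum_shuffles_24 (f : Equiv.Perm (Fin 4) → V) :
    ∑ σ ∈ shuffles 2 4, f σ = f 1 + (f (Equiv.swap 1 2)
      + (f (Equiv.swap 2 3 * Equiv.swap 1 2)
      + (f (Equiv.swap 0 1 * Equiv.swap 1 2)
      + (f (Equiv.swap 0 2 * Equiv.swap 0 3 * Equiv.swap 0 1)
      + f (Equiv.swap 0 2 * Equiv.swap 1 3))))) := by
  rw [show shuffles 2 4 = {1, Equiv.swap 1 2, Equiv.swap 2 3 * Equiv.swap 1 2,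
      Equiv.swap 0 1 * Equiv.swap 1 2, Equiv.swap 0 2 * Equiv.swap 0 3 * Equiv.swap 0 1,
      Equiv.swap 0 2 * Equiv.swap 1 3} from by decide,
    Finset.sum_insert (by decide), Finset.sum_insert (by decide),
    Finset.sum_insert (by decide), Finset.sum_insert (by decide),
    Finset.sum_insert (by decide), Finset.sum_singleton]

lemma delta_single3 (x y z : ℕ) :
    delta (Finsupp.single [x, y, z] 1) =
      deltaTerm [x, y, z] 0 + deltaTerm [x, y, z] 1 + deltaTerm [x, y, z] 2 := by
  rw [delta, Finsupp.linearCombination_single, one_smul]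
  show ∑ i ∈ Finset.range 3, deltaTerm [x, y, z] i = _
  rw [Finset.sum_range_succ, Finset.sum_range_succ, Finset.sum_range_one]

lemma two_nsmul_zero (x : V) : (2 : ℕ) • x = 0 := by
  rw [← Nat.cast_smul_eq_nsmul (ZMod 2), show ((2 : ℕ) : ZMod 2) = 0 from by decide, zero_smul]

lemma two_zsmul_zero (x : V) : (2 : ℤ) • x = 0 := by
  rw [← Int.cast_smul_eq_zsmul (ZMod 2), show ((2 : ℤ) : ZMod 2) = 0 from by decide, zero_smul]

end Helpers

/-- In the mod-2 Fox-Neuwirth complex `FN 4` the following elements are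
cocycles: `[a,0,0] + [0,a,0] + [0,0,a]` for `a > 0`; `[a,0,b] + [b,0,a]` for `0 < a < b`;
and `[b,a,b]` for `0 ≤ a ≤ b`. -/
theorem bs4_cocycles :
    (∀ a : ℕ, 0 < a →
      delta (Finsupp.single [a, 0, 0] 1 + Finsupp.single [0, a, 0] 1
        + Finsupp.single [0, 0, a] 1) = 0) ∧
    (∀ a b : ℕ, 0 < a → a < b →
      delta (Finsupp.single [a, 0, b] 1 + Finsupp.single [b, 0, a] 1) = 0) ∧
    (∀ a b : ℕ, a ≤ b →
      delta (Finsupp.single [b, a, b] (1 : ZMod 2)) = 0) := by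
  refine ⟨?_, ?_, ?_⟩
  · intro a ha
    rcases Nat.lt_or_ge 1 a with h1 | h1
    · have ha : 0 < a := by omega
      have hA1 : deltaTerm [a, 0, 0] 0 = 0 := by
        rw [deltaTerm_eq [a,0,0] 0 a 0 0 1 2 [] [0,0] [[],[]]
          (by simp) (by simp) (by simp [show ¬ a < 0 from by omega]) (by simp) (by simp)
          (by simp [List.splitOnP, List.splitOnPPrepend_cons_eq_if, -List.splitOnPPrepend_nil_right]) rfl (by simp), sum_shuffles_12]
        exact single_self_add' _
      have hA2 : deltaTerm [a, 0, 0] 1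
          = Finsupp.single [a,1,0] (1 : ZMod 2) + Finsupp.single [1,a,0] 1 := by
        rw [deltaTerm_eq [a,0,0] 1 0 1 0 1 2 [] [0] [[a],[]]
          (by simp) (by simp [ha]) (by simp) (by simp) (by simp)
          (by simp [List.splitOnP, List.splitOnPPrepend_cons_eq_if, -List.splitOnPPrepend_nil_right, show a ≠ 1 from by omega]) rfl
          (by simp [show a ≠ 1 from by omega]), sum_shuffles_12]
        rfl
      have hA3 : deltaTerm [a, 0, 0] 2 = 0 := by
        rw [deltaTerm_eq [a,0,0] 2 0 0 0 1 2 [a,0] [] [[],[]]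
          (by simp) (by simp) (by simp) (by simp) (by simp)
          (by simp [List.splitOnP, List.splitOnPPrepend_cons_eq_if, -List.splitOnPPrepend_nil_right]) rfl (by simp), sum_shuffles_12]
        exact single_self_add' _
      have hB1 : deltaTerm [0, a, 0] 0
          = Finsupp.single [1,a,0] (1 : ZMod 2) + Finsupp.single [a,1,0] 1 := by
        rw [deltaTerm_eq [0,a,0] 0 0 0 1 1 2 [] [0] [[],[a]]
          (by simp) (by simp) (by simp [ha]) (by simp) (by simp)
          (by simp [List.splitOnP, List.splitOnPPrepend_cons_eq_if, -List.splitOnPPrepend_nil_right, show a ≠ 1 from by omega]) rfl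
          (by simp), sum_shuffles_12]
        rfl
      have hB2 : deltaTerm [0, a, 0] 1 = 0 := by
        rw [deltaTerm_eq [0,a,0] 1 a 0 0 1 2 [0] [0] [[],[]]
          (by simp) (by simp [show ¬ a < 0 from by omega]) (by simp [show ¬ a < 0 from by omega])
          (by simp) (by simp)
          (by simp [List.splitOnP, List.splitOnPPrepend_cons_eq_if, -List.splitOnPPrepend_nil_right]) rfl (by simp), sum_shuffles_12]
        exact single_self_add' _
      have hB3 : deltaTerm [0, a, 0] 2
          = Finsupp.single [0,a,1] (1 : ZMod 2) + Finsupp.single [0,1,a] 1 := by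
        rw [deltaTerm_eq [0,a,0] 2 0 1 0 1 2 [0] [] [[a],[]]
          (by simp) (by simp [ha]) (by simp) (by simp) (by simp)
          (by simp [List.splitOnP, List.splitOnPPrepend_cons_eq_if, -List.splitOnPPrepend_nil_right, show a ≠ 1 from by omega]) rfl
          (by simp [show a ≠ 1 from by omega]), sum_shuffles_12]
        rfl
      have hC1 : deltaTerm [0, 0, a] 0 = 0 := by
        rw [deltaTerm_eq [0,0,a] 0 0 0 0 1 2 [] [0,a] [[],[]]
          (by simp) (by simp) (by simp) (by simp) (by simp)
          (by simp [List.splitOnP, List.splitOnPPrepend_cons_eq_if, -List.splitOnPPrepend_nil_right]) rfl (by simp), sum_shuffles_12]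
        exact single_self_add' _
      have hC2 : deltaTerm [0, 0, a] 1
          = Finsupp.single [0,1,a] (1 : ZMod 2) + Finsupp.single [0,a,1] 1 := by
        rw [deltaTerm_eq [0,0,a] 1 0 0 1 1 2 [0] [] [[],[a]]
          (by simp) (by simp) (by simp [ha]) (by simp) (by simp)
          (by simp [List.splitOnP, List.splitOnPPrepend_cons_eq_if, -List.splitOnPPrepend_nil_right, show a ≠ 1 from by omega]) rfl
          (by simp), sum_shuffles_12]
        rfl
      have hC3 : deltaTerm [0, 0, a] 2 = 0 := by
        rw [deltaTerm_eq [0,0,a] 2 a 0 0 1 2 [0,0] [] [[],[]]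
          (by simp) (by simp [show ¬ a < 0 from by omega]) (by simp) (by simp) (by simp)
          (by simp [List.splitOnP, List.splitOnPPrepend_cons_eq_if, -List.splitOnPPrepend_nil_right]) rfl (by simp), sum_shuffles_12]
        exact single_self_add' _
      rw [map_add, map_add, delta_single3, delta_single3, delta_single3,
        hA1, hA2, hA3, hB1, hB2, hB3, hC1, hC2, hC3]
      abel_nf
      simp [show (2 : ZMod 2) = 0 from by decide]
    · have haa : a = 1 := by omega
      subst haa
      have hD1 : deltaTerm [1, 0, 0] 0 = 0 := by
        rw [deltaTerm_eq [1,0,0] 0 1 0 0 1 2 [] [0,0] [[],[]]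
          (by simp) (by simp) (by simp) (by simp) (by simp)
          (by simp [List.splitOnP, List.splitOnPPrepend_cons_eq_if, -List.splitOnPPrepend_nil_right]) rfl (by simp), sum_shuffles_12]
        exact single_self_add' _
      have hD2 : deltaTerm [1, 0, 0] 1 = Finsupp.single [1,1,0] (1 : ZMod 2) := by
        rw [deltaTerm_eq [1,0,0] 1 0 1 0 2 3 [] [0] [[],[],[]]
          (by simp) (by simp) (by simp) (by simp) (by simp)
          (by simp [List.splitOnP, List.splitOnPPrepend_cons_eq_if, -List.splitOnPPrepend_nil_right]) rfl (by simp), sum_shuffles_23]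
        show Finsupp.single [1,1,0] (1 : ZMod 2)
          + (Finsupp.single [1,1,0] 1 + Finsupp.single [1,1,0] 1) = _
        rw [single_self_add', add_zero]
      have hD3 : deltaTerm [1, 0, 0] 2 = 0 := by
        rw [deltaTerm_eq [1,0,0] 2 0 0 0 1 2 [1,0] [] [[],[]]
          (by simp) (by simp) (by simp) (by simp) (by simp)
          (by simp [List.splitOnP, List.splitOnPPrepend_cons_eq_if, -List.splitOnPPrepend_nil_right]) rfl (by simp), sum_shuffles_12]
        exact single_self_add' _
      have hE1 : deltaTerm [0, 1, 0] 0 = Finsupp.single [1,1,0] (1 : ZMod 2) := by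
        rw [deltaTerm_eq [0,1,0] 0 0 0 1 1 3 [] [0] [[],[],[]]
          (by simp) (by simp) (by simp) (by simp) (by simp)
          (by simp [List.splitOnP, List.splitOnPPrepend_cons_eq_if, -List.splitOnPPrepend_nil_right]) rfl (by simp), sum_shuffles_13]
        show Finsupp.single [1,1,0] (1 : ZMod 2)
          + (Finsupp.single [1,1,0] 1 + Finsupp.single [1,1,0] 1) = _
        rw [single_self_add', add_zero]
      have hE2 : deltaTerm [0, 1, 0] 1 = 0 := by
        rw [deltaTerm_eq [0,1,0] 1 1 0 0 1 2 [0] [0] [[],[]]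
          (by simp) (by simp) (by simp) (by simp) (by simp)
          (by simp [List.splitOnP, List.splitOnPPrepend_cons_eq_if, -List.splitOnPPrepend_nil_right]) rfl (by simp), sum_shuffles_12]
        exact single_self_add' _
      have hE3 : deltaTerm [0, 1, 0] 2 = Finsupp.single [0,1,1] (1 : ZMod 2) := by
        rw [deltaTerm_eq [0,1,0] 2 0 1 0 2 3 [0] [] [[],[],[]]
          (by simp) (by simp) (by simp) (by simp) (by simp)
          (by simp [List.splitOnP, List.splitOnPPrepend_cons_eq_if, -List.splitOnPPrepend_nil_right]) rfl (by simp), sum_shuffles_23]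
        show Finsupp.single [0,1,1] (1 : ZMod 2)
          + (Finsupp.single [0,1,1] 1 + Finsupp.single [0,1,1] 1) = _
        rw [single_self_add', add_zero]
      have hF1 : deltaTerm [0, 0, 1] 0 = 0 := by
        rw [deltaTerm_eq [0,0,1] 0 0 0 0 1 2 [] [0,1] [[],[]]
          (by simp) (by simp) (by simp) (by simp) (by simp)
          (by simp [List.splitOnP, List.splitOnPPrepend_cons_eq_if, -List.splitOnPPrepend_nil_right]) rfl (by simp), sum_shuffles_12]
        exact single_self_add' _
      have hF2 : deltaTerm [0, 0, 1] 1 = Finsupp.single [0,1,1] (1 : ZMod 2) := by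
        rw [deltaTerm_eq [0,0,1] 1 0 0 1 1 3 [0] [] [[],[],[]]
          (by simp) (by simp) (by simp) (by simp) (by simp)
          (by simp [List.splitOnP, List.splitOnPPrepend_cons_eq_if, -List.splitOnPPrepend_nil_right]) rfl (by simp), sum_shuffles_13]
        show Finsupp.single [0,1,1] (1 : ZMod 2)
          + (Finsupp.single [0,1,1] 1 + Finsupp.single [0,1,1] 1) = _
        rw [single_self_add', add_zero]
      have hF3 : deltaTerm [0, 0, 1] 2 = 0 := by
        rw [deltaTerm_eq [0,0,1] 2 1 0 0 1 2 [0,0] [] [[],[]]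
          (by simp) (by simp) (by simp) (by simp) (by simp)
          (by simp [List.splitOnP, List.splitOnPPrepend_cons_eq_if, -List.splitOnPPrepend_nil_right]) rfl (by simp), sum_shuffles_12]
        exact single_self_add' _
      rw [map_add, map_add, delta_single3, delta_single3, delta_single3,
        hD1, hD2, hD3, hE1, hE2, hE3, hF1, hF2, hF3]
      abel_nf
      simp [show (2 : ZMod 2) = 0 from by decide]
  · intro a b ha hab
    rcases Nat.lt_or_ge 1 a with h1 | h1
    · have hG1 : deltaTerm [a, 0, b] 0 = 0 := by
        rw [deltaTerm_eq [a,0,b] 0 a 0 0 1 2 [] [0,b] [[],[]]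
          (by simp) (by simp) (by simp [show ¬ a < 0 from by omega]) (by simp) (by simp)
          (by simp [List.splitOnP, List.splitOnPPrepend_cons_eq_if, -List.splitOnPPrepend_nil_right]) rfl (by simp), sum_shuffles_12]
        exact single_self_add' _
      have hG2 : deltaTerm [a, 0, b] 1
          = Finsupp.single [a,1,b] (1 : ZMod 2) + Finsupp.single [b,1,a] 1 := by
        rw [deltaTerm_eq [a,0,b] 1 0 1 1 1 2 [] [] [[a],[b]]
          (by simp) (by simp [show 0 < a from by omega]) (by simp [show 0 < b from by omega])
          (by simp) (by simp)
          (by simp [List.splitOnP, List.splitOnPPrepend_cons_eq_if, -List.splitOnPPrepend_nil_right, show a ≠ 1 from by omega,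
            show b ≠ 1 from by omega]) rfl
          (by simp [show a ≠ 1 from by omega]), sum_shuffles_12]
        rfl
      have hG3 : deltaTerm [a, 0, b] 2 = 0 := by
        rw [deltaTerm_eq [a,0,b] 2 b 0 0 1 2 [a,0] [] [[],[]]
          (by simp [show ¬ b < 0 from by omega]) (by simp [show ¬ b < 0 from by omega])
          (by simp) (by simp) (by simp)
          (by simp [List.splitOnP, List.splitOnPPrepend_cons_eq_if, -List.splitOnPPrepend_nil_right]) rfl (by simp), sum_shuffles_12]
        exact single_self_add' _
      have hH1 : deltaTerm [b, 0, a] 0 = 0 := by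
        rw [deltaTerm_eq [b,0,a] 0 b 0 0 1 2 [] [0,a] [[],[]]
          (by simp) (by simp) (by simp [show ¬ b < 0 from by omega]) (by simp) (by simp)
          (by simp [List.splitOnP, List.splitOnPPrepend_cons_eq_if, -List.splitOnPPrepend_nil_right]) rfl (by simp), sum_shuffles_12]
        exact single_self_add' _
      have hH2 : deltaTerm [b, 0, a] 1
          = Finsupp.single [b,1,a] (1 : ZMod 2) + Finsupp.single [a,1,b] 1 := by
        rw [deltaTerm_eq [b,0,a] 1 0 1 1 1 2 [] [] [[b],[a]]
          (by simp) (by simp [show 0 < b from by omega]) (by simp [show 0 < a from by omega])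
          (by simp) (by simp)
          (by simp [List.splitOnP, List.splitOnPPrepend_cons_eq_if, -List.splitOnPPrepend_nil_right, show a ≠ 1 from by omega,
            show b ≠ 1 from by omega]) rfl
          (by simp [show b ≠ 1 from by omega]), sum_shuffles_12]
        rfl
      have hH3 : deltaTerm [b, 0, a] 2 = 0 := by
        rw [deltaTerm_eq [b,0,a] 2 a 0 0 1 2 [b,0] [] [[],[]]
          (by simp [show ¬ a < 0 from by omega]) (by simp [show ¬ a < 0 from by omega])
          (by simp) (by simp) (by simp)
          (by simp [List.splitOnP, List.splitOnPPrepend_cons_eq_if, -List.splitOnPPrepend_nil_right]) rfl (by simp), sum_shuffles_12]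
        exact single_self_add' _
      rw [map_add, delta_single3, delta_single3, hG1, hG2, hG3, hH1, hH2, hH3]
      abel_nf
      simp [show (2 : ZMod 2) = 0 from by decide]
    · have haa : a = 1 := by omega
      subst haa
      have hb : 1 < b := by omega
      have hI1 : deltaTerm [1, 0, b] 0 = 0 := by
        rw [deltaTerm_eq [1,0,b] 0 1 0 0 1 2 [] [0,b] [[],[]]
          (by simp) (by simp) (by simp) (by simp) (by simp)
          (by simp [List.splitOnP, List.splitOnPPrepend_cons_eq_if, -List.splitOnPPrepend_nil_right]) rfl (by simp), sum_shuffles_12]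
        exact single_self_add' _
      have hI2 : deltaTerm [1, 0, b] 1
          = Finsupp.single [1,1,b] (1 : ZMod 2)
            + (Finsupp.single [1,b,1] 1 + Finsupp.single [b,1,1] 1) := by
        rw [deltaTerm_eq [1,0,b] 1 0 1 1 2 3 [] [] [[],[],[b]]
          (by simp) (by simp) (by simp [show 0 < b from by omega]) (by simp) (by simp)
          (by simp [List.splitOnP, List.splitOnPPrepend_cons_eq_if, -List.splitOnPPrepend_nil_right, show b ≠ 1 from by omega]) rfl
          (by simp), sum_shuffles_23]
        rfl
      have hI3 : deltaTerm [1, 0, b] 2 = 0 := by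
        rw [deltaTerm_eq [1,0,b] 2 b 0 0 1 2 [1,0] [] [[],[]]
          (by simp [show ¬ b < 0 from by omega]) (by simp [show ¬ b < 0 from by omega])
          (by simp) (by simp) (by simp)
          (by simp [List.splitOnP, List.splitOnPPrepend_cons_eq_if, -List.splitOnPPrepend_nil_right]) rfl (by simp), sum_shuffles_12]
        exact single_self_add' _
      have hJ1 : deltaTerm [b, 0, 1] 0 = 0 := by
        rw [deltaTerm_eq [b,0,1] 0 b 0 0 1 2 [] [0,1] [[],[]]
          (by simp) (by simp) (by simp [show ¬ b < 0 from by omega]) (by simp) (by simp)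
          (by simp [List.splitOnP, List.splitOnPPrepend_cons_eq_if, -List.splitOnPPrepend_nil_right]) rfl (by simp), sum_shuffles_12]
        exact single_self_add' _
      have hJ2 : deltaTerm [b, 0, 1] 1
          = Finsupp.single [b,1,1] (1 : ZMod 2)
            + (Finsupp.single [1,b,1] 1 + Finsupp.single [1,1,b] 1) := by
        rw [deltaTerm_eq [b,0,1] 1 0 1 1 1 3 [] [] [[b],[],[]]
          (by simp) (by simp [show 0 < b from by omega]) (by simp) (by simp) (by simp)
          (by simp [List.splitOnP, List.splitOnPPrepend_cons_eq_if, -List.splitOnPPrepend_nil_right, show b ≠ 1 from by omega]) rfl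
          (by simp [show b ≠ 1 from by omega]), sum_shuffles_13]
        rfl
      have hJ3 : deltaTerm [b, 0, 1] 2 = 0 := by
        rw [deltaTerm_eq [b,0,1] 2 1 0 0 1 2 [b,0] [] [[],[]]
          (by simp) (by simp) (by simp) (by simp) (by simp)
          (by simp [List.splitOnP, List.splitOnPPrepend_cons_eq_if, -List.splitOnPPrepend_nil_right]) rfl (by simp), sum_shuffles_12]
        exact single_self_add' _
      rw [map_add, delta_single3, delta_single3, hI1, hI2, hI3, hJ1, hJ2, hJ3]
      abel_nf
      simp [show (2 : ZMod 2) = 0 from by decide]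
  · intro a b hab
    rcases eq_or_lt_of_le hab with rfl | hlt
    · have hK1 : deltaTerm [a, a, a] 0 = 0 := by
        rw [deltaTerm_eq [a,a,a] 0 a 0 0 1 2 [] [a,a] [[],[]]
          (by simp) (by simp) (by simp) (by simp) (by simp)
          (by simp [List.splitOnP, List.splitOnPPrepend_cons_eq_if, -List.splitOnPPrepend_nil_right]) rfl (by simp), sum_shuffles_12]
        exact single_self_add' _
      have hK2 : deltaTerm [a, a, a] 1 = 0 := by
        rw [deltaTerm_eq [a,a,a] 1 a 0 0 1 2 [a] [a] [[],[]]
          (by simp) (by simp) (by simp) (by simp) (by simp)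
          (by simp [List.splitOnP, List.splitOnPPrepend_cons_eq_if, -List.splitOnPPrepend_nil_right]) rfl (by simp), sum_shuffles_12]
        exact single_self_add' _
      have hK3 : deltaTerm [a, a, a] 2 = 0 := by
        rw [deltaTerm_eq [a,a,a] 2 a 0 0 1 2 [a,a] [] [[],[]]
          (by simp) (by simp) (by simp) (by simp) (by simp)
          (by simp [List.splitOnP, List.splitOnPPrepend_cons_eq_if, -List.splitOnPPrepend_nil_right]) rfl (by simp), sum_shuffles_12]
        exact single_self_add' _
      rw [delta_single3, hK1, hK2, hK3]
      simp
    · rcases Nat.lt_or_ge (a + 1) b with h2 | h2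
      · have hM1 : deltaTerm [b, a, b] 0 = 0 := by
          rw [deltaTerm_eq [b,a,b] 0 b 0 0 1 2 [] [a,b] [[],[]]
            (by simp) (by simp) (by simp [show ¬ b < a from by omega]) (by simp) (by simp)
            (by simp [List.splitOnP, List.splitOnPPrepend_cons_eq_if, -List.splitOnPPrepend_nil_right]) rfl (by simp), sum_shuffles_12]
          exact single_self_add' _
        have hM2 : deltaTerm [b, a, b] 1 = 0 := by
          rw [deltaTerm_eq [b,a,b] 1 a 1 1 1 2 [] [] [[b],[b]]
            (by simp) (by simp [show a < b from by omega]) (by simp [show a < b from by omega])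
            (by simp) (by simp)
            (by simp [List.splitOnP, List.splitOnPPrepend_cons_eq_if, -List.splitOnPPrepend_nil_right, show b ≠ a + 1 from by omega]) rfl
            (by simp [show b ≠ a + 1 from by omega]), sum_shuffles_12]
          exact single_self_add' _
        have hM3 : deltaTerm [b, a, b] 2 = 0 := by
          rw [deltaTerm_eq [b,a,b] 2 b 0 0 1 2 [b,a] [] [[],[]]
            (by simp [show ¬ b < a from by omega]) (by simp [show ¬ b < a from by omega])
            (by simp) (by simp) (by simp)
            (by simp [List.splitOnP, List.splitOnPPrepend_cons_eq_if, -List.splitOnPPrepend_nil_right]) rfl (by simp), sum_shuffles_12]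
          exact single_self_add' _
        rw [delta_single3, hM1, hM2, hM3]
        simp
      · have hbb : b = a + 1 := by omega
        subst hbb
        have hL1 : deltaTerm [a + 1, a, a + 1] 0 = 0 := by
          rw [deltaTerm_eq [a+1,a,a+1] 0 (a+1) 0 0 1 2 [] [a,a+1] [[],[]]
            (by simp) (by simp) (by simp [show ¬ a + 1 < a from by omega]) (by simp) (by simp)
            (by simp [List.splitOnP, List.splitOnPPrepend_cons_eq_if, -List.splitOnPPrepend_nil_right]) rfl (by simp), sum_shuffles_12]
          exact single_self_add' _
        have hL2 : deltaTerm [a + 1, a, a + 1] 1 = 0 := by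
          rw [deltaTerm_eq [a+1,a,a+1] 1 a 1 1 2 4 [] [] [[],[],[],[]]
            (by simp) (by simp) (by simp) (by simp) (by simp)
            (by simp [List.splitOnP, List.splitOnPPrepend_cons_eq_if, -List.splitOnPPrepend_nil_right]) rfl (by simp), sum_shuffles_24]
          show Finsupp.single [a+1,a+1,a+1] (1 : ZMod 2)
            + (Finsupp.single [a+1,a+1,a+1] 1 + (Finsupp.single [a+1,a+1,a+1] 1
            + (Finsupp.single [a+1,a+1,a+1] 1 + (Finsupp.single [a+1,a+1,a+1] 1
            + Finsupp.single [a+1,a+1,a+1] 1)))) = 0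
          simp [single_self_add']
        have hL3 : deltaTerm [a + 1, a, a + 1] 2 = 0 := by
          rw [deltaTerm_eq [a+1,a,a+1] 2 (a+1) 0 0 1 2 [a+1,a] [] [[],[]]
            (by simp [show ¬ a + 1 < a from by omega]) (by simp [show ¬ a + 1 < a from by omega])
            (by simp) (by simp) (by simp)
            (by simp [List.splitOnP, List.splitOnPPrepend_cons_eq_if, -List.splitOnPPrepend_nil_right]) rfl (by simp), sum_shuffles_12]
          exact single_self_add' _
        rw [delta_single3, hL1, hL2, hL3]
        simp

end FoxNeuwirth
end

section
/- Let ℓ ≥ 0 and n ≥ 1, and let g_{ℓ,n} ∈ FN_{n·2^ℓ} be the basis tuple of degree n(2^ℓ−1) consisting of n runs of 2^ℓ−1 consecutive entries equal to 1, separated by single entries equal to 0. Then g_{ℓ,n} is a cocycle: δ(g_{ℓ,n}) = 0 in the mod-2 Fox–Neuwirth complex FN_{n·2^ℓ}. -/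
namespace FoxNeuwirth

private lemma take_append_off {α : Type*} (l1 l2 : List α) (n : ℕ) :
    (l1 ++ l2).take (l1.length + n) = l1 ++ l2.take n := by
  induction l1 with
  | nil => simp
  | cons a t ih => simpa [Nat.succ_add] using ih

private lemma drop_append_off {α : Type*} (l1 l2 : List α) (n : ℕ) :
    (l1 ++ l2).drop (l1.length + n) = l2.drop n := by
  induction l1 with
  | nil => simp
  | cons a t ih => simpa [Nat.succ_add] using ih

private lemma take_append_off' {α : Type*} (l1 l2 : List α) (m n : ℕ) (h : m = l1.length) :
    (l1 ++ l2).take (m + n) = l1 ++ l2.take n := by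
  subst h; exact take_append_off l1 l2 n

private lemma drop_append_off' {α : Type*} (l1 l2 : List α) (m n : ℕ) (h : m = l1.length) :
    (l1 ++ l2).drop (m + n) = l2.drop n := by
  subst h; exact drop_append_off l1 l2 n

private lemma getD_const {α : Type*} (d : α) (L : List α) (h : ∀ x ∈ L, x = d) :
    ∀ i, L.getD i d = d := by
  induction L with
  | nil => intro i; simp
  | cons a t ih =>
    intro i
    cases i with
    | zero => simpa using h a (by simp)
    | succ m => simpa using ih (fun x hx => h x (by simp [hx])) m

private lemma intercalate_rep (c : ℕ) :
    ∀ m, List.intercalate [c] (List.replicate (m + 1) ([] : List ℕ)) = List.replicate m c := by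
  intro m
  induction m with
  | zero => rfl
  | succ q ih =>
    have h2 : List.replicate (q + 1 + 1) ([] : List ℕ)
        = [] :: [] :: List.replicate q [] := rfl
    have h1 : List.replicate (q + 1) ([] : List ℕ) = [] :: List.replicate q [] := rfl
    rw [h2]
    rw [h1] at ih
    simp only [List.intercalate, List.intersperse_cons_cons, List.flatten_cons,
      List.nil_append] at ih ⊢
    rw [ih, List.replicate_succ]
    rfl

private lemma splitOnP_rep (p : ℕ → Bool) (x : ℕ) (hx : p x = true) :
    ∀ m, (List.replicate m x).splitOnP p = List.replicate (m + 1) ([] : List ℕ) := by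
  intro m
  induction m with
  | zero => simp
  | succ q ih =>
    rw [List.replicate_succ, List.splitOnP_cons, if_pos hx, ih]
    rfl

private lemma takeWhile_rep_append (p : ℕ → Bool) (x : ℕ) (hx : p x = true) (m : ℕ)
    (t : List ℕ) :
    (List.replicate m x ++ t).takeWhile p = List.replicate m x ++ t.takeWhile p := by
  induction m with
  | zero => simp
  | succ q ih =>
    rw [List.replicate_succ, List.cons_append, List.takeWhile_cons, hx]
    simp only [ih, List.replicate_succ, List.cons_append, if_true, decide_true]

private lemma sum_shuffles_const (k : ℕ) (hk : 1 ≤ k) (L : List ℕ) :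
    ∑ _σ ∈ shuffles k (2 * k), Finsupp.single L (1 : ZMod 2) = 0 := by
  haveI : NeZero (2 * k) := ⟨by omega⟩
  set c : Fin (2 * k) := ⟨k, by omega⟩ with hc
  have hval : ∀ x : Fin (2 * k), ((x + c : Fin (2 * k)) : ℕ)
      = if (x : ℕ) < k then (x : ℕ) + k else (x : ℕ) - k := by
    intro x
    have hx2 := x.isLt
    rw [Fin.val_add]
    show ((x : ℕ) + k) % (2 * k) = _
    by_cases h : (x : ℕ) < k
    · rw [if_pos h, Nat.mod_eq_of_lt (by omega)]
    · rw [if_neg h, Nat.mod_eq_sub_mod (by omega), Nat.mod_eq_of_lt (by omega)]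
      omega
  have hmem : ∀ σ ∈ shuffles k (2 * k), σ * Equiv.addRight c ∈ shuffles k (2 * k) := by
    intro σ hσ
    simp only [shuffles, Finset.mem_filter, Finset.mem_univ, true_and] at hσ ⊢
    obtain ⟨h1, h2⟩ := hσ
    constructor
    · intro p q hpq hq
      simp only [Equiv.Perm.mul_apply, Equiv.coe_addRight]
      have hpq' : (p : ℕ) < (q : ℕ) := hpq
      have e1 : ((p + c : Fin (2 * k)) : ℕ) = (p : ℕ) + k := by
        rw [hval, if_pos (by omega)]
      have e2 : ((q + c : Fin (2 * k)) : ℕ) = (q : ℕ) + k := by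
        rw [hval, if_pos hq]
      exact h2 (p + c) (q + c) (by rw [Fin.lt_def, e1, e2]; omega) (by rw [e1]; omega)
    · intro p q hpq hp
      simp only [Equiv.Perm.mul_apply, Equiv.coe_addRight]
      have hpq' : (p : ℕ) < (q : ℕ) := hpq
      have hq2 := q.isLt
      have e1 : ((p + c : Fin (2 * k)) : ℕ) = (p : ℕ) - k := by
        rw [hval, if_neg (by omega)]
      have e2 : ((q + c : Fin (2 * k)) : ℕ) = (q : ℕ) - k := by
        rw [hval, if_neg (by omega)]
      exact h1 (p + c) (q + c) (by rw [Fin.lt_def, e1, e2]; omega) (by rw [e2]; omega)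
  have hcc : c + c = (0 : Fin (2 * k)) := by
    apply Fin.ext
    rw [Fin.val_add]
    show (k + k) % (2 * k) = (0 : Fin (2 * k)).val
    rw [← two_mul, Nat.mod_self]
    simp
  have hw : Equiv.addRight c * Equiv.addRight c = 1 := by
    ext x
    simp [Equiv.Perm.mul_apply, add_assoc, hcc]
  refine Finset.sum_involution (fun σ _ => σ * Equiv.addRight c) ?_ ?_ hmem ?_
  · intro σ _
    rw [← Finsupp.single_add]
    have h11 : (1 + 1 : ZMod 2) = 0 := rfl
    rw [h11, Finsupp.single_zero]
  · intro σ _ _ h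
    have h0 := congrArg (fun τ : Equiv.Perm (Fin (2 * k)) => τ 0) h
    simp only [Equiv.Perm.mul_apply, Equiv.coe_addRight] at h0
    have h1 : (0 : Fin (2 * k)) + c = 0 := σ.injective h0
    rw [zero_add] at h1
    have := congrArg Fin.val h1
    simp only [hc, Fin.val_zero] at this
    omega
  · intro σ _
    show σ * Equiv.addRight c * Equiv.addRight c = σ
    rw [mul_assoc, hw, mul_one]




private lemma sum_shuffles_eq_zero' (kk N k : ℕ) (hk : 1 ≤ k) (hkk : kk = k) (hN : N = 2 * k)
    (f : Equiv.Perm (Fin N) → V) (L : List ℕ)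
    (hf : ∀ σ ∈ shuffles kk N, f σ = Finsupp.single L 1) :
    ∑ σ ∈ shuffles kk N, f σ = 0 := by
  subst hN
  rw [Finset.sum_congr rfl hf, hkk]
  exact sum_shuffles_const k hk L

private lemma intercalate_ofFn_nil (c N m : ℕ) (hN : N = m + 1) (f : Fin N → List ℕ)
    (hf : ∀ t, f t = []) : List.intercalate [c] (List.ofFn f) = List.replicate m c := by
  have hfe : f = fun _ => [] := funext hf
  rw [hfe, List.ofFn_const, hN, intercalate_rep]

private lemma deltaTerm_one (a : List ℕ) (i : ℕ) (hi : i < a.length)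
    (hv : a.getD i 0 = 1) (hle : ∀ x ∈ a, x ≤ 1) : deltaTerm a i = 0 := by
  have hlc : (a.take i).reverse.takeWhile (fun x => decide (a.getD i 0 < x)) = [] := by
    rw [hv]
    cases h : (a.take i).reverse with
    | nil => rfl
    | cons b s =>
      have hb : b ∈ a := List.take_subset i a (List.mem_reverse.mp (h ▸ (List.mem_cons_self (a := b) (l := s))))
      have : ¬ (1 < b) := by have := hle b hb; omega
      simp [List.takeWhile_cons, this]
  have hrc : (a.drop (i + 1)).takeWhile (fun x => decide (a.getD i 0 < x)) = [] := by
    rw [hv]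
    cases h : a.drop (i + 1) with
    | nil => rfl
    | cons b s =>
      have hb : b ∈ a := List.drop_subset (i+1) a (h ▸ (List.mem_cons_self (a := b) (l := s)))
      have : ¬ (1 < b) := by have := hle b hb; omega
      simp [List.takeWhile_cons, this]
  have hruns : List.splitOnP (fun x => x == a.getD i 0 + 1)
      (((a.set i (a.getD i 0 + 1)).drop i).take 1) = [[], []] := by
    rw [List.drop_eq_getElem_cons (by simpa using hi)]
    rw [List.take_succ_cons, List.take_zero, List.getElem_set_self (by simpa using hi)]
    rw [List.splitOnP_cons]
    simp
  have hnil : ∀ x ∈ ([[], []] : List (List ℕ)), x = [] := by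
    intro x hx
    simpa using hx
  simp only [deltaTerm]
  refine sum_shuffles_eq_zero' _ _ 1 le_rfl ?_ ?_ _
    (a.take i ++ [a.getD i 0 + 1] ++ a.drop (i + 1)) ?_
  · rw [hlc]
    simp only [List.length_nil, Nat.sub_zero]
    rw [List.drop_eq_nil_of_le (List.length_take_le i a)]
    rfl
  · rw [hlc, hrc]
    simp only [List.length_nil, Nat.sub_zero, Nat.add_zero, Nat.sub_self, Nat.zero_add]
    rw [hruns]
    rfl
  · intro σ hσ
    simp only [hlc, hrc, List.length_nil, Nat.sub_zero, Nat.add_zero, Nat.sub_self,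
      Nat.zero_add, hruns]
    rw [intercalate_ofFn_nil (m := 1)]
    · simp
    · rfl
    · intro t
      exact getD_const [] _ hnil _


private lemma takeWhile_zero (p : ℕ → Bool) (h0 : p 0 = false) (t : List ℕ)
    (ht : t = [] ∨ ∃ s, t = 0 :: s) : t.takeWhile p = [] := by
  rcases ht with rfl | ⟨s, rfl⟩
  · rfl
  · simp [List.takeWhile_cons, h0]

private lemma deltaTerm_zero (B : ℕ) (hB : 1 ≤ B) (P S : List ℕ)
    (hP : P = [] ∨ ∃ P', P = P' ++ [0]) (hS : S = [] ∨ ∃ t, S = 0 :: t) :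
    deltaTerm (P ++ List.replicate (B - 1) 1 ++ [0] ++ List.replicate (B - 1) 1 ++ S)
      (P.length + (B - 1)) = 0 := by
  set a : List ℕ := P ++ List.replicate (B - 1) 1 ++ [0] ++ List.replicate (B - 1) 1 ++ S
    with ha
  have h0 : a.getD (P.length + (B - 1)) 0 = 0 := by
    rw [ha]
    simp only [List.append_assoc]
    rw [List.getD_append_right _ _ _ _ (by omega),
      show P.length + (B - 1) - P.length = B - 1 from by omega,
      List.getD_append_right _ _ _ _ (by simp),
      show B - 1 - (List.replicate (B - 1) (1:ℕ)).length = 0 from by simp]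
    rfl
  have htake : a.take (P.length + (B - 1)) = P ++ List.replicate (B - 1) 1 := by
    rw [ha]
    simp only [List.append_assoc]
    rw [take_append_off, List.take_left' (by simp)]
  have hlc : (a.take (P.length + (B - 1))).reverse.takeWhile (fun x => decide (0 < x))
      = List.replicate (B - 1) 1 := by
    rw [htake, List.reverse_append, List.reverse_replicate]
    rw [takeWhile_rep_append _ 1 (by simp)]
    rw [takeWhile_zero _ (by simp) _ ?_]
    · simp
    · rcases hP with rfl | ⟨P', rfl⟩
      · left; rfl
      · right; exact ⟨P'.reverse, by simp⟩
  have hdrop1 : a.drop (P.length + (B - 1) + 1) = List.replicate (B - 1) 1 ++ S := by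
    rw [ha]
    simp only [List.append_assoc]
    rw [show P.length + (B - 1) + 1 = P.length + ((B - 1) + 1) from by omega, drop_append_off,
      drop_append_off' _ _ _ 1 (by simp)]
    rfl
  have hrc : (a.drop (P.length + (B - 1) + 1)).takeWhile (fun x => decide (0 < x))
      = List.replicate (B - 1) 1 := by
    rw [hdrop1, takeWhile_rep_append _ 1 (by simp), takeWhile_zero _ (by simp) _ hS]
    simp
  have hpre : a.take P.length = P := by
    rw [ha]; simp only [List.append_assoc]; exact List.take_left (l₁ := P)
  have hsuf : a.drop (P.length + (B - 1) + (B - 1) + 1) = S := by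
    rw [ha]
    simp only [List.append_assoc]
    rw [show P.length + (B - 1) + (B - 1) + 1 = P.length + ((B - 1) + (1 + (B - 1)))
        from by omega, drop_append_off,
      drop_append_off' _ _ _ (1 + (B - 1)) (by simp),
      drop_append_off' _ _ _ (B - 1) (by simp),
      List.drop_left' (by simp : (List.replicate (B - 1) (1:ℕ)).length = B - 1)]
  have hA : ((a.set (P.length + (B - 1)) 1).drop P.length).take (B - 1 + (B - 1) + 1)
      = List.replicate (B - 1 + (B - 1) + 1) 1 := by
    rw [ha]
    simp only [List.append_assoc]
    rw [List.set_append_right _ _ (by omega),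
      show P.length + (B - 1) - P.length = B - 1 from by omega,
      List.set_append_right _ _ (by simp),
      show B - 1 - (List.replicate (B - 1) (1:ℕ)).length = 0 from by simp,
      List.singleton_append, List.set_cons_zero, List.drop_left,
      show B - 1 + (B - 1) + 1 = (B - 1) + ((B - 1) + 1) from by omega,
      List.replicate_add, List.replicate_succ,
      take_append_off' _ _ _ _ (by simp), List.take_succ_cons,
      List.take_left' (by simp)]
  have hruns : List.splitOnP (fun x => x == 1) (List.replicate (B - 1 + (B - 1) + 1) 1)
      = List.replicate (B - 1 + (B - 1) + 1 + 1) [] := splitOnP_rep _ 1 (by simp) _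
  have hcount : List.countP (fun x => x == 1) ((a.take (P.length + (B - 1))).drop P.length)
      = B - 1 := by
    rw [htake, List.drop_left, List.countP_replicate]
    simp
  simp only [deltaTerm, h0, Nat.zero_add, hlc, hrc, List.length_replicate,
    Nat.add_sub_cancel, Nat.add_sub_cancel_left, hpre, hsuf, hA, hruns, hcount]
  refine sum_shuffles_eq_zero' _ _ B hB ?_ ?_ _
    (P ++ List.replicate (B - 1 + (B - 1) + 1) 1 ++ S) ?_
  · omega
  · rw [h0]
    simp only [Nat.zero_add, hlc, hrc, List.length_replicate, Nat.add_sub_cancel,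
      Nat.add_sub_cancel_left]
    rw [hA, hruns]
    simp only [List.length_replicate]
    omega
  · intro σ hσ
    rw [intercalate_ofFn_nil _ _ (B - 1 + (B - 1) + 1) (by simp) _
      (fun t => getD_const [] _ (fun x hx => List.eq_of_mem_replicate hx) _)]

/-- The Hopf ring generator `g_{ℓ,n}`: the basis tuple of `FN (n·2^ℓ)` of degree
`n·(2^ℓ - 1)` consisting of `n` runs of `2^ℓ - 1` consecutive entries equal to `1`,
separated by single entries equal to `0`. -/
def gList (l n : ℕ) : List ℕ :=
  List.intercalate [0] (List.replicate n (List.replicate (2 ^ l - 1) 1))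

private lemma gList_one (l : ℕ) : gList l 1 = List.replicate (2 ^ l - 1) 1 := by
  simp [gList, List.intercalate]

private lemma gList_succ (l n : ℕ) (hn : 1 ≤ n) :
    gList l (n + 1) = List.replicate (2 ^ l - 1) 1 ++ [0] ++ gList l n := by
  obtain ⟨m, rfl⟩ : ∃ m, n = m + 1 := ⟨n - 1, by omega⟩
  simp [gList, List.replicate_succ, List.intercalate, List.intersperse_cons_cons,
    List.append_assoc]

private lemma gList_struct (l : ℕ) : ∀ n, 1 ≤ n →
    (∀ x ∈ gList l n, x ≤ 1) ∧
    (∃ S₀, gList l n = List.replicate (2 ^ l - 1) 1 ++ S₀ ∧ (S₀ = [] ∨ ∃ t, S₀ = 0 :: t)) ∧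
    (∀ i, i < (gList l n).length → (gList l n).getD i 0 = 0 →
      ∃ P S, gList l n
          = P ++ List.replicate (2 ^ l - 1) 1 ++ [0] ++ List.replicate (2 ^ l - 1) 1 ++ S
        ∧ P.length + (2 ^ l - 1) = i ∧ (P = [] ∨ ∃ P', P = P' ++ [0])
        ∧ (S = [] ∨ ∃ t, S = 0 :: t)) := by
  have hB1 : 1 ≤ 2 ^ l := Nat.one_le_two_pow
  intro n
  induction n with
  | zero => omega
  | succ m ih =>
    intro _
    by_cases hm : 1 ≤ m
    · obtain ⟨ih1, ⟨S₀, hS₀, hS₀'⟩, ih3⟩ := ih hm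
      have hrec := gList_succ l m hm
      refine ⟨?_, ?_, ?_⟩
      · intro x hx
        rw [hrec] at hx
        simp only [List.mem_append] at hx
        rcases hx with (hx | hx) | hx
        · have := List.eq_of_mem_replicate hx; omega
        · simp at hx; omega
        · exact ih1 x hx
      · refine ⟨0 :: gList l m, ?_, Or.inr ⟨gList l m, rfl⟩⟩
        rw [hrec]; simp [List.append_assoc]
      · intro i hi h0
        rw [hrec] at hi h0
        rcases Nat.lt_or_ge i (2 ^ l - 1) with hlt | hge
        · exfalso
          rw [List.append_assoc, List.getD_append _ _ _ _ (by simp; omega)] at h0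
          rw [List.getD_eq_getElem _ _ (by simp; omega)] at h0
          simp at h0
        · rcases Nat.lt_or_ge i (2 ^ l) with heq | hge2
          · have hieq : i = 2 ^ l - 1 := by omega
            refine ⟨[], S₀, ?_, by simpa using hieq.symm, Or.inl rfl, hS₀'⟩
            rw [hrec, hS₀]
            simp [List.append_assoc]
          · have hj : i - 2 ^ l < (gList l m).length := by
              rw [List.length_append, List.length_append] at hi
              simp at hi
              omega
            have h0' : (gList l m).getD (i - 2 ^ l) 0 = 0 := by
              rw [List.getD_append_right _ _ _ _ (by simp; omega)] at h0
              rw [← h0]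
              congr 1
              simp
              omega
            obtain ⟨P, S, hdec, hlen, hPor, hSor⟩ := ih3 (i - 2 ^ l) hj h0'
            refine ⟨List.replicate (2 ^ l - 1) 1 ++ [0] ++ P, S, ?_, ?_, ?_, hSor⟩
            · rw [hrec, hdec]; simp [List.append_assoc]
            · simp only [List.length_append, List.length_replicate, List.length_cons,
                List.length_nil]
              omega
            · right
              rcases hPor with rfl | ⟨P', rfl⟩
              · exact ⟨List.replicate (2 ^ l - 1) 1, by simp⟩
              · exact ⟨List.replicate (2 ^ l - 1) 1 ++ [0] ++ P', by simp [List.append_assoc]⟩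
    · have hm0 : m = 0 := by omega
      subst hm0
      refine ⟨?_, ⟨[], by simp [gList_one], Or.inl rfl⟩, ?_⟩
      · intro x hx
        rw [gList_one] at hx
        have := List.eq_of_mem_replicate hx; omega
      · intro i hi h0
        exfalso
        rw [gList_one] at hi h0
        rw [List.getD_eq_getElem _ _ hi] at h0
        simp at h0

/-- For `ℓ ≥ 0` and `n ≥ 1`, the generator `g_{ℓ,n}` is a cocycle:
`δ(g_{ℓ,n}) = 0` in the mod-2 Fox-Neuwirth complex `FN (n·2^ℓ)`. -/
theorem delta_gList_eq_zero (l n : ℕ) (hn : 1 ≤ n) :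
    delta (Finsupp.single (gList l n) 1) = 0 := by
  rw [delta, Finsupp.linearCombination_single, one_smul]
  apply Finset.sum_eq_zero
  intro i hi
  rw [Finset.mem_range] at hi
  obtain ⟨h1, -, h3⟩ := gList_struct l n hn
  have hmem : (gList l n).getD i 0 ∈ gList l n := by
    rw [List.getD_eq_getElem _ _ hi]
    exact List.getElem_mem _
  have hle := h1 _ hmem
  rcases Nat.lt_or_ge ((gList l n).getD i 0) 1 with h | h
  · have h0 : (gList l n).getD i 0 = 0 := by omega
    obtain ⟨P, S, hdec, hlen, hPor, hSor⟩ := h3 i hi h0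
    rw [hdec, ← hlen]
    exact deltaTerm_zero (2 ^ l) Nat.one_le_two_pow P S hPor hSor
  · have hv : (gList l n).getD i 0 = 1 := by omega
    exact deltaTerm_one _ _ hi hv h1

end FoxNeuwirth
end

section
/- Let ℓ ≥ 0 and n, m ≥ 1. In the mod-2 Fox–Neuwirth complexes, the transfer product of the generators satisfies g_{ℓ,n} ⊙ g_{ℓ,m} = C(n+m, n)·g_{ℓ,n+m} in FN_{(n+m)·2^ℓ}, where C(n+m,n) is the binomial coefficient reduced mod 2. -/
namespace FoxNeuwirth

/-- The transfer product on basis tuples: the `0`-block sequence of a tuple is its ordered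
list of maximal runs of strictly positive entries (including empty runs), the runs being
separated by single zero entries; `a ⊙ b` is the sum over all `(r,s)`-shuffles of the
combined block sequences of the tuple reassembling the shuffled blocks with single zero
entries separating consecutive blocks. -/
noncomputable def transferBasis (a b : List ℕ) : V :=
  let Ba := a.splitOnP (fun x => x == 0)
  let Bb := b.splitOnP (fun x => x == 0)
  let C := Ba ++ Bb
  ∑ σ ∈ shuffles Ba.length C.length,
    Finsupp.single
      (List.intercalate [0]
        (List.ofFn fun t : Fin C.length => C.getD ((σ.symm t : Fin C.length) : ℕ) []))
      (1 : ZMod 2)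

/-- The transfer product, extended bilinearly over `F₂`. -/
noncomputable def transfer : V →ₗ[ZMod 2] V →ₗ[ZMod 2] V :=
  Finsupp.linearCombination (ZMod 2) fun a : List ℕ =>
    Finsupp.linearCombination (ZMod 2) fun b : List ℕ => transferBasis a b

section Aux



variable {k N : ℕ}

lemma mem_shuffles {σ : Equiv.Perm (Fin N)} :
    σ ∈ shuffles k N ↔
      (∀ p q : Fin N, p < q → (q : ℕ) < k → σ p < σ q) ∧
      (∀ p q : Fin N, p < q → k ≤ (p : ℕ) → σ p < σ q) := by
  simp [shuffles]

/-- the image of the first k positions -/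
def imgOf (hk : k ≤ N) (σ : Equiv.Perm (Fin N)) : Finset (Fin N) :=
  Finset.image (fun i : Fin k => σ (Fin.castLE hk i)) Finset.univ

lemma card_imgOf (hk : k ≤ N) (σ : Equiv.Perm (Fin N)) : (imgOf hk σ).card = k := by
  rw [imgOf, Finset.card_image_of_injective _
      (fun a b h => Fin.castLE_injective hk (σ.injective h)),
    Finset.card_univ, Fintype.card_fin]

lemma firstPart_eq (hk : k ≤ N) {σ : Equiv.Perm (Fin N)} (hσ : σ ∈ shuffles k N) :
    (fun i : Fin k => σ (Fin.castLE hk i)) = (imgOf hk σ).orderEmbOfFin (card_imgOf hk σ) := by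
  apply Finset.orderEmbOfFin_unique
  · intro x; exact Finset.mem_image_of_mem _ (Finset.mem_univ x)
  · intro i j hij
    exact (mem_shuffles.1 hσ).1 _ _ (by simpa using hij) (by simpa using j.2)

lemma not_mem_imgOf (hk : k ≤ N) (σ : Equiv.Perm (Fin N)) (p : Fin N) (hp : k ≤ (p : ℕ)) :
    σ p ∉ imgOf hk σ := by
  simp only [imgOf, Finset.mem_image, Finset.mem_univ, true_and]
  rintro ⟨i, hi⟩
  have h2 := σ.injective hi
  have : (Fin.castLE hk i : ℕ) = (p : ℕ) := by rw [h2]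
  simp at this
  omega
  

variable {k N : ℕ}

lemma card_compl_imgOf (hk : k ≤ N) (σ : Equiv.Perm (Fin N)) :
    (imgOf hk σ)ᶜ.card = N - k := by
  rw [Finset.card_compl, card_imgOf, Fintype.card_fin]

lemma secondPart_eq (hk : k ≤ N) {σ : Equiv.Perm (Fin N)} (hσ : σ ∈ shuffles k N) :
    (fun i : Fin (N - k) => σ ⟨k + (i : ℕ), by omega⟩)
      = (imgOf hk σ)ᶜ.orderEmbOfFin (card_compl_imgOf hk σ) := by
  apply Finset.orderEmbOfFin_unique
  · intro x
    rw [Finset.mem_compl]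
    exact not_mem_imgOf hk σ _ (by simp)
  · intro i j hij
    exact (mem_shuffles.1 hσ).2 _ _ (by simpa using hij) (by simp)

lemma orderEmb_congr {α : Type*} [LinearOrder α] {j : ℕ} {s t : Finset α}
    (hs : s.card = j) (ht : t.card = j) (hst : s = t) :
    s.orderEmbOfFin hs = t.orderEmbOfFin ht := by subst hst; rfl

lemma shuffles_inj (hk : k ≤ N) {σ τ : Equiv.Perm (Fin N)}
    (hσ : σ ∈ shuffles k N) (hτ : τ ∈ shuffles k N)
    (h : imgOf hk σ = imgOf hk τ) : σ = τ := by
  have e1 := orderEmb_congr (card_imgOf hk σ) (card_imgOf hk τ) h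
  have e2 := orderEmb_congr (card_compl_imgOf hk σ) (card_compl_imgOf hk τ) (by rw [h])
  have h1 : (fun i : Fin k => σ (Fin.castLE hk i)) = fun i => τ (Fin.castLE hk i) := by
    rw [firstPart_eq hk hσ, firstPart_eq hk hτ, e1]
  have h2 : (fun i : Fin (N - k) => σ ⟨k + (i : ℕ), by omega⟩)
      = fun i : Fin (N - k) => τ ⟨k + (i : ℕ), by omega⟩ := by
    rw [secondPart_eq hk hσ, secondPart_eq hk hτ, e2]
  ext p
  rcases lt_or_ge (p : ℕ) k with hp | hp
  · have := congrFun h1 ⟨p, hp⟩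
    simpa [Fin.castLE] using congrArg Fin.val this
  · have := congrFun h2 ⟨(p : ℕ) - k, by omega⟩
    have hpe : (⟨k + ((p : ℕ) - k), by omega⟩ : Fin N) = p := by
      ext; simp; omega
    rw [hpe] at this
    exact congrArg Fin.val this


variable {k N : ℕ}

lemma shuffles_surj (hk : k ≤ N) (S : Finset (Fin N)) (hS : S.card = k) :
    ∃ σ ∈ shuffles k N, imgOf hk σ = S := by
  have hSc : Sᶜ.card = N - k := by rw [Finset.card_compl, hS, Fintype.card_fin]
  set f : Fin N → Fin N := fun p =>
    if h : (p : ℕ) < k then S.orderEmbOfFin hS ⟨p, h⟩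
    else Sᶜ.orderEmbOfFin hSc ⟨(p : ℕ) - k, by omega⟩ with hf
  have hmemS : ∀ (p : Fin N) (h : (p : ℕ) < k), f p ∈ S := by
    intro p h; simp only [hf, dif_pos h]; exact Finset.orderEmbOfFin_mem _ _ _
  have hmemSc : ∀ (p : Fin N) (h : ¬ (p : ℕ) < k), f p ∈ Sᶜ := by
    intro p h; simp only [hf, dif_neg h]; exact Finset.orderEmbOfFin_mem _ _ _
  have hinj : Function.Injective f := by
    intro p q hpq
    by_cases hp : (p : ℕ) < k <;> by_cases hq : (q : ℕ) < k
    · simp only [hf, dif_pos hp, dif_pos hq] at hpq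
      have := congrArg Fin.val ((S.orderEmbOfFin hS).injective hpq)
      simp only at this
      ext; exact this
    · exact absurd (hpq ▸ hmemS p hp) (Finset.mem_compl.1 (hmemSc q hq))
    · exact absurd ((hpq.symm) ▸ hmemS q hq) (Finset.mem_compl.1 (hmemSc p hp))
    · simp only [hf, dif_neg hp, dif_neg hq] at hpq
      have := (Sᶜ.orderEmbOfFin hSc).injective hpq
      have := congrArg Fin.val this
      simp only at this
      ext; omega
  let σ : Equiv.Perm (Fin N) := Equiv.ofBijective f (Finite.injective_iff_bijective.mp hinj)
  have hσapp : ∀ p, σ p = f p := fun p => rfl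
  refine ⟨σ, ?_, ?_⟩
  · rw [mem_shuffles]
    constructor
    · intro p q hpq hq
      have hp : (p : ℕ) < k := lt_of_lt_of_le (Fin.lt_iff_val_lt_val.mp hpq) (le_of_lt hq) |>.trans_le (le_refl _)
      rw [hσapp, hσapp, hf]
      simp only [dif_pos hp, dif_pos hq]
      exact (S.orderEmbOfFin hS).strictMono (by simpa using hpq)
    · intro p q hpq hp
      have hq : ¬ (q : ℕ) < k := by
        have := Fin.lt_iff_val_lt_val.mp hpq; omega
      rw [hσapp, hσapp, hf]
      simp only [dif_neg (by omega : ¬ (p : ℕ) < k), dif_neg hq]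
      apply (Sᶜ.orderEmbOfFin hSc).strictMono
      have := Fin.lt_iff_val_lt_val.mp hpq
      simp only [Fin.mk_lt_mk]; omega
  · ext x
    simp only [imgOf, Finset.mem_image, Finset.mem_univ, true_and]
    constructor
    · rintro ⟨i, rfl⟩
      rw [hσapp]
      exact hmemS _ (by simp)
    · intro hx
      have : x ∈ Set.range (S.orderEmbOfFin hS) := by
        rw [Finset.range_orderEmbOfFin]; exact hx
      obtain ⟨i, hi⟩ := this
      refine ⟨i, ?_⟩
      rw [hσapp, hf]
      simp only [Fin.coe_castLE, dif_pos i.2]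
      simpa using hi

lemma card_shuffles (hk : k ≤ N) : (shuffles k N).card = N.choose k := by
  have := Finset.card_powersetCard k (Finset.univ : Finset (Fin N))
  rw [Finset.card_univ, Fintype.card_fin] at this
  rw [← this]
  apply Finset.card_bij (fun σ _ => imgOf hk σ)
  · intro σ hσ
    rw [Finset.mem_powersetCard]
    exact ⟨Finset.subset_univ _, card_imgOf hk σ⟩
  · intro σ hσ τ hτ h
    exact shuffles_inj hk hσ hτ h
  · intro S hS
    rw [Finset.mem_powersetCard] at hS
    obtain ⟨σ, h1, h2⟩ := shuffles_surj hk S hS.2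
    exact ⟨σ, h1, h2⟩


variable {k N : ℕ}

lemma splitOnP_gList (l n : ℕ) (hn : 1 ≤ n) :
    (gList l n).splitOnP (fun x => x == 0)
      = List.replicate n (List.replicate (2 ^ l - 1) 1) := by
  have h : (gList l n).splitOn 0 = List.replicate n (List.replicate (2 ^ l - 1) 1) := by
    rw [gList]
    exact List.splitOn_intercalate 0
      (fun L hL => by
        rw [List.eq_of_mem_replicate hL]
        simp [List.mem_replicate])
      (by simp; omega)
  simpa [List.splitOn] using h

lemma transferBasis_apply (a b : List ℕ) {Ba Bb : List (List ℕ)}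
    (ha : a.splitOnP (fun x => x == 0) = Ba) (hb : b.splitOnP (fun x => x == 0) = Bb) :
    transferBasis a b =
      ∑ σ ∈ shuffles Ba.length (Ba ++ Bb).length,
        Finsupp.single
          (List.intercalate [0]
            (List.ofFn fun t : Fin (Ba ++ Bb).length =>
              (Ba ++ Bb).getD ((σ.symm t : Fin (Ba ++ Bb).length) : ℕ) []))
          (1 : ZMod 2) := by
  subst ha hb; rfl

lemma card_shuffles_congr (k : ℕ) {M N : ℕ} (h : M = N) :
    (shuffles k M).card = (shuffles k N).card := by subst h; rfl

lemma sum_const_blocks (k N : ℕ) (B : List ℕ) (C : List (List ℕ))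
    (hC : C = List.replicate N B) :
    (∑ σ ∈ shuffles k C.length,
      Finsupp.single
        (List.intercalate [0]
          (List.ofFn fun t : Fin C.length => C.getD ((σ.symm t : Fin C.length) : ℕ) []))
        (1 : ZMod 2))
    = (shuffles k N).card • Finsupp.single (List.intercalate [0] (List.replicate N B))
        (1 : ZMod 2) := by
  subst hC
  have key : ∀ σ ∈ shuffles k (List.replicate N B).length,
      Finsupp.single
        (List.intercalate [0]
          (List.ofFn fun t : Fin (List.replicate N B).length =>
            (List.replicate N B).getD
              ((σ.symm t : Fin (List.replicate N B).length) : ℕ) []))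
        (1 : ZMod 2)
      = Finsupp.single (List.intercalate [0] (List.replicate N B)) (1 : ZMod 2) := by
    intro σ _
    congr 1
    have h1 : ∀ t : Fin (List.replicate N B).length,
        (List.replicate N B).getD ((σ.symm t : Fin (List.replicate N B).length) : ℕ) []
          = B := by
      intro t
      rw [List.getD_eq_getElem _ _ (Fin.is_lt _)]
      exact List.getElem_replicate ..
    simp only [h1, List.ofFn_const, List.length_replicate]
  rw [Finset.sum_congr rfl key, Finset.sum_const,
    card_shuffles_congr k (List.length_replicate ..)]

lemma transferBasis_gList (l n m : ℕ) (hn : 1 ≤ n) (hm : 1 ≤ m) :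
    transferBasis (gList l n) (gList l m)
      = (shuffles n (n + m)).card • Finsupp.single (gList l (n + m)) (1 : ZMod 2) := by
  set B := List.replicate (2 ^ l - 1) 1 with hB
  rw [transferBasis_apply (gList l n) (gList l m)
        (splitOnP_gList l n hn) (splitOnP_gList l m hm),
      sum_const_blocks (List.replicate n B).length (n + m) B _
        (by rw [← List.replicate_add]),
      gList, List.length_replicate]


end Aux

/-- For `ℓ ≥ 0` and `n, m ≥ 1`, the transfer product of the generators
satisfies `g_{ℓ,n} ⊙ g_{ℓ,m} = C(n+m, n) · g_{ℓ,n+m}` in `FN ((n+m)·2^ℓ)`, where the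
binomial coefficient is reduced mod 2. -/
theorem transfer_gList (l n m : ℕ) (hn : 1 ≤ n) (hm : 1 ≤ m) :
    transfer (Finsupp.single (gList l n) 1) (Finsupp.single (gList l m) 1)
      = ((n + m).choose n : ZMod 2) • Finsupp.single (gList l (n + m)) 1 := by
  have h1 : transfer (Finsupp.single (gList l n) 1) (Finsupp.single (gList l m) 1)
      = transferBasis (gList l n) (gList l m) := by
    rw [transfer, Finsupp.linearCombination_single, one_smul,
      Finsupp.linearCombination_single, one_smul]
  rw [h1, transferBasis_gList l n m hn hm,
    card_shuffles (Nat.le_add_right n m), Nat.cast_smul_eq_nsmul]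

end FoxNeuwirth
end
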